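/- arXiv:2310.07884 — 12 statements merged into one kernel-verified Lean document; each statement's English description precedes it below -/
import Mathlib

section
/- For n ∈ ℕ define the distribution p*^{(n)} by p*_i = (1/H_n)/(i+1) for i = 1,...,n−1, p*_n = 1/H_n, and p*_i = 0 for i ≥ n+1. Then for every strategy q, A(p*^{(n)}, q) = (1/H_n)·(1 − ∏_{l=1}^n (1 − q_l/l)); in particular A(p*^{(n)}, q) ≤ 1/H_n for all q, with equality attained by the strategy q^{(1)} (i.e. q_i = 1 for all i). -/
open scoped BigOperators

/-- `lam p i = Σ_{l=i}^∞ p_l / l`. -/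
noncomputable def lam (p : ℕ → ℝ) (i : ℕ) : ℝ := ∑' l : ℕ, if i ≤ l then p l / (l : ℝ) else 0

/-- `U q i = ∏_{l=1}^i (1 - q_l / l)`, with `U q 0 = 1`. -/
noncomputable def U (q : ℕ → ℝ) (i : ℕ) : ℝ := ∏ l ∈ Finset.Icc 1 i, (1 - q l / (l : ℝ))

/-- `A p q = Σ_{i=1}^∞ U_{i-1}(q) q_i λ_i(p)`. -/
noncomputable def A (p q : ℕ → ℝ) : ℝ := ∑' i : ℕ, U q i * q (i + 1) * lam p (i + 1)

/-- The single-threshold strategy `q^{(l)}`. -/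
def thresh (l : ℕ) : ℕ → ℝ := fun i => if l ≤ i then 1 else 0

/-- The `n`-th harmonic number. -/
noncomputable def H (n : ℕ) : ℝ := ∑ i ∈ Finset.Icc 1 n, (1 : ℝ) / i

/-- The distribution `p*^{(n)}`. -/
noncomputable def pstar (n : ℕ) : ℕ → ℝ := fun i =>
  if 1 ≤ i ∧ i ≤ n - 1 then (1 / H n) / ((i : ℝ) + 1)
  else if i = n then 1 / H n else 0

lemma pstar_zero {n l : ℕ} (hn : 1 ≤ n) (hl : n < l ∨ l = 0) : pstar n l = 0 := by
  simp only [pstar]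
  rw [if_neg, if_neg] <;> omega

lemma H_pos {n : ℕ} (hn : 1 ≤ n) : 0 < H n := by
  apply Finset.sum_pos
  · intro i hi
    simp only [Finset.mem_Icc] at hi
    have h0 : (0 : ℝ) < i := by exact_mod_cast Nat.lt_of_lt_of_le Nat.zero_lt_one hi.1
    positivity
  · exact ⟨1, by simp [Finset.mem_Icc]; omega⟩

lemma lam_pstar_zero {n i : ℕ} (hn : 1 ≤ n) (hi : n < i) : lam (pstar n) i = 0 := by
  unfold lam
  convert tsum_zero with l
  split_ifs with h
  · rw [pstar_zero hn (Or.inl (lt_of_lt_of_le hi h))]; simp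
  · rfl

lemma lam_pstar {n i : ℕ} (hn : 1 ≤ n) (h1 : 1 ≤ i) (h2 : i ≤ n) :
    lam (pstar n) i = (1 / H n) / i := by
  have hH : H n ≠ 0 := ne_of_gt (H_pos hn)
  have hn0 : (n : ℝ) ≠ 0 := Nat.cast_ne_zero.mpr (by omega)
  have hi0 : (i : ℝ) ≠ 0 := Nat.cast_ne_zero.mpr (by omega)
  unfold lam
  rw [tsum_eq_sum (s := Finset.Icc i n) (by
    intro l hl
    simp only [Finset.mem_Icc, not_and, not_le] at hl
    split_ifs with h
    · rw [pstar_zero hn (Or.inl (hl h))]; simp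
    · rfl)]
  rw [Finset.sum_congr rfl (fun l hl => by
    rw [if_pos (Finset.mem_Icc.mp hl).1])]
  have hIcc : Finset.Icc i n = Finset.Ico i (n + 1) := by
    rw [Finset.Ico_add_one_right_eq_Icc]
  rw [hIcc, Finset.sum_Ico_succ_top (by omega)]
  have hnn : pstar n n = 1 / H n := by
    simp only [pstar]
    rw [if_neg (by omega)]
    simp
  have key : ∑ l ∈ Finset.Ico i n, pstar n l / l
      = ∑ l ∈ Finset.Ico i n,
        ((fun m : ℕ => -(1 / H n / (m : ℝ))) (l + 1) - (fun m : ℕ => -(1 / H n / (m : ℝ))) l) := by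
    apply Finset.sum_congr rfl
    intro l hl
    simp only [Finset.mem_Ico] at hl
    have hl1 : 1 ≤ l := le_trans h1 hl.1
    have hll : pstar n l = 1 / H n / ((l : ℝ) + 1) := by
      simp only [pstar]
      rw [if_pos ⟨hl1, by omega⟩]
    rw [hll]
    have hl0 : (l : ℝ) ≠ 0 := Nat.cast_ne_zero.mpr (by omega)
    simp only []
    push_cast
    field_simp
    ring
  rw [key, Finset.sum_Ico_eq_sub _ h2,
    Finset.sum_range_sub (fun m : ℕ => -(1 / H n / (m : ℝ))),
    Finset.sum_range_sub (fun m : ℕ => -(1 / H n / (m : ℝ)))]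
  rw [hnn]
  simp only [Nat.cast_zero, div_zero, neg_zero, sub_zero]
  field_simp
  ring

theorem stmt1 (n : ℕ) (hn : 1 ≤ n) :
    (∀ q : ℕ → ℝ, (∀ i, 1 ≤ i → q i ∈ Set.Icc (0 : ℝ) 1) →
      A (pstar n) q = (1 / H n) * (1 - ∏ l ∈ Finset.Icc 1 n, (1 - q l / (l : ℝ))) ∧
      A (pstar n) q ≤ 1 / H n) ∧
    A (pstar n) (thresh 1) = 1 / H n := by
  have hc : 0 < 1 / H n := by have := H_pos hn; positivity
  have main : ∀ q : ℕ → ℝ,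
      A (pstar n) q = (1 / H n) * (1 - ∏ l ∈ Finset.Icc 1 n, (1 - q l / (l : ℝ))) := by
    intro q
    unfold A
    rw [tsum_eq_sum (s := Finset.range n) (by
      intro i hi
      simp only [Finset.mem_range, not_lt] at hi
      rw [lam_pstar_zero hn (by omega)]
      ring)]
    have key : ∀ i ∈ Finset.range n,
        U q i * q (i + 1) * lam (pstar n) (i + 1) = (1 / H n) * (U q i - U q (i + 1)) := by
      intro i hi
      simp only [Finset.mem_range] at hi
      rw [lam_pstar hn (by omega) (by omega)]
      have hU : U q (i + 1) = U q i * (1 - q (i + 1) / ((i : ℝ) + 1)) := by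
        unfold U
        rw [Finset.prod_Icc_succ_top (by omega)]
        push_cast
        ring
      rw [hU]
      have h0 : ((i : ℝ) + 1) ≠ 0 := by positivity
      push_cast
      field_simp
      ring
    rw [Finset.sum_congr rfl key, ← Finset.mul_sum, Finset.sum_range_sub']
    have hU0 : U q 0 = 1 := by simp [U]
    rw [hU0]
    rfl
  refine ⟨fun q hq => ⟨main q, ?_⟩, ?_⟩
  · rw [main q]
    have hP : 0 ≤ ∏ l ∈ Finset.Icc 1 n, (1 - q l / (l : ℝ)) := by
      apply Finset.prod_nonneg
      intro l hl
      simp only [Finset.mem_Icc] at hl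
      have hq' := hq l hl.1
      have hl1 : (1 : ℝ) ≤ l := by exact_mod_cast hl.1
      have : q l / (l : ℝ) ≤ 1 := by
        rw [div_le_one (by linarith)]
        linarith [hq'.2]
      linarith
    nlinarith [hc.le]
  · rw [main (thresh 1)]
    have : ∏ l ∈ Finset.Icc 1 n, (1 - thresh 1 l / (l : ℝ)) = 0 := by
      apply Finset.prod_eq_zero (i := 1) (by simp [Finset.mem_Icc]; omega)
      simp [thresh]
    rw [this]
    ring
end

section
/- Fix an integer n̄ ≥ 2 and define the probability vector x^{(n̄)} on {1,...,n̄} by x^{(n̄)}_1 = 1/(1+H_{n̄−1}) and x^{(n̄)}_i = (1/(1+H_{n̄−1}))/(i−1) for i = 2,...,n̄. Then for every distribution p supported on {1,...,n̄} (i.e. p_i = 0 for i > n̄), Σ_{l=1}^{n̄} x^{(n̄)}_l · A(p, q^{(l)}) = 1/(1+H_{n̄−1}). -/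
open scoped BigOperators

/-- The randomization distribution `x^{(n)}` over thresholds. -/
noncomputable def xdist (n : ℕ) : ℕ → ℝ := fun i =>
  if i = 1 then 1 / (1 + H (n - 1))
  else if 2 ≤ i ∧ i ≤ n then (1 / (1 + H (n - 1))) / ((i : ℝ) - 1)
  else 0

lemma U_thresh (l : ℕ) (hl : 1 ≤ l) (i : ℕ) :
    U (thresh l) i = if i < l then 1 else ((l:ℝ)-1)/i := by
  induction i with
  | zero => simp [U, show 0 < l by omega]
  | succ i ih =>
    rw [U, Finset.prod_Icc_succ_top (by omega : 1 ≤ i+1), ← U, ih]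
    by_cases h1 : i + 1 < l
    · have ht : thresh l (i+1) = 0 := by simp only [thresh]; rw [if_neg (by omega)]
      rw [ht, if_pos (by omega : i < l), if_pos h1]
      simp
    · have ht : thresh l (i+1) = 1 := by simp only [thresh]; rw [if_pos (by omega)]
      rw [ht, if_neg h1]
      by_cases h2 : i < l
      · have hli : l = i + 1 := by omega
        subst hli
        rw [if_pos h2]
        have : ((i:ℝ)+1) ≠ 0 := by positivity
        push_cast
        field_simp
      · rw [if_neg h2]
        have hi1 : (1:ℝ) ≤ (i:ℝ) := by exact_mod_cast (by omega : 1 ≤ i)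
        have hi : (i:ℝ) ≠ 0 := by linarith
        have hi2 : ((i:ℝ)+1) ≠ 0 := by linarith
        push_cast
        field_simp
        ring

-- key step lemma: sum of xdist * increment = c
lemma step_sum (n m : ℕ) (hm : 1 ≤ m) (hmn : m + 1 ≤ n) :
    ∑ l ∈ Finset.Icc 1 n, xdist n l * (U (thresh l) m * thresh l (m+1))
      = 1 / (1 + H (n-1)) := by
  set c := 1 / (1 + H (n-1)) with hc
  have hH : (1 + H (n-1)) ≠ 0 := by
    have : 0 ≤ H (n-1) := Finset.sum_nonneg (fun i _ => by positivity)
    linarith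
  have key : ∀ l ∈ Finset.Icc 1 n, xdist n l * (U (thresh l) m * thresh l (m+1))
      = if l ∈ Finset.Icc 2 (m+1) then c / m else 0 := by
    intro l hl
    rw [Finset.mem_Icc] at hl
    rw [U_thresh l hl.1]
    simp only [Finset.mem_Icc]
    simp only [thresh]
    by_cases h2 : l ≤ m + 1
    · by_cases h3 : l = 1
      · subst h3
        rw [if_neg (by omega : ¬ m < 1), if_neg (by omega : ¬ (2 ≤ 1 ∧ 1 ≤ m+1))]
        simp
      · rw [if_pos h2, if_pos (show 2 ≤ l ∧ l ≤ m+1 from ⟨by omega, h2⟩)]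
        by_cases h4 : m < l
        · have hlm : l = m + 1 := by omega
          subst hlm
          rw [if_pos h4]
          simp only [xdist]
          rw [if_neg (by omega), if_pos (show 2 ≤ m+1 ∧ m+1 ≤ n from ⟨by omega, by omega⟩)]
          push_cast
          ring
        · rw [if_neg h4]
          simp only [xdist]
          rw [if_neg h3, if_pos (show 2 ≤ l ∧ l ≤ n from ⟨by omega, by omega⟩)]
          have hl2 : (2:ℝ) ≤ (l:ℝ) := by exact_mod_cast (by omega : 2 ≤ l)
          have h1 : (l:ℝ) - 1 ≠ 0 := by linarith
          have hm0 : (m:ℝ) ≠ 0 := by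
            have : (1:ℝ) ≤ (m:ℝ) := by exact_mod_cast hm
            linarith
          field_simp [hH]
          have hinv : (H (n-1)) * (1 + H (n-1))⁻¹ + (1 + H (n-1))⁻¹ = 1 := by
            field_simp
            ring
          linear_combination (-1 : ℝ) * hinv
    · rw [if_neg (by omega : ¬ l ≤ m + 1), if_neg (by omega : ¬ (2 ≤ l ∧ l ≤ m+1))]
      simp
  rw [Finset.sum_congr rfl key, Finset.sum_ite_mem]
  have hinter : Finset.Icc 1 n ∩ Finset.Icc 2 (m+1) = Finset.Icc 2 (m+1) := by
    ext a
    simp only [Finset.mem_inter, Finset.mem_Icc]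
    omega
  rw [hinter, Finset.sum_const, Nat.card_Icc, nsmul_eq_mul]
  have hm0 : (m:ℝ) ≠ 0 := by
    have : (1:ℝ) ≤ (m:ℝ) := by exact_mod_cast hm
    linarith
  have : ((m + 1 + 1 - 2 : ℕ) : ℝ) = (m:ℝ) := by push_cast [show m+1+1-2 = m by omega]; ring
  rw [this]
  field_simp

lemma K_lemma (n m : ℕ) (hm : 1 ≤ m) (hmn : m ≤ n) :
    ∑ l ∈ Finset.Icc 1 n, xdist n l *
      ∑ i ∈ Finset.range m, U (thresh l) i * thresh l (i+1)
      = m * (1 / (1 + H (n-1))) := by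
  induction m with
  | zero => omega
  | succ m ih =>
    by_cases hm0 : m = 0
    · subst hm0
      have key : ∀ l ∈ Finset.Icc 1 n, xdist n l *
          ∑ i ∈ Finset.range 1, U (thresh l) i * thresh l (i+1)
          = if l = 1 then 1 / (1 + H (n-1)) else 0 := by
        intro l hl
        rw [Finset.mem_Icc] at hl
        rw [Finset.sum_range_one]
        have hU : U (thresh l) 0 = 1 := by simp [U]
        rw [hU, one_mul]
        simp only [thresh]
        by_cases h : l = 1
        · subst h
          rw [if_pos (by omega), if_pos rfl]
          simp [xdist]
        · rw [if_neg (by omega), if_neg h]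
          simp
      rw [Finset.sum_congr rfl key, Finset.sum_ite_eq' (Finset.Icc 1 n) 1 (fun _ => 1 / (1 + H (n-1)))]
      rw [if_pos (by rw [Finset.mem_Icc]; omega)]
      simp
    · have ihm := ih (by omega) (by omega)
      simp only [Finset.sum_range_succ, mul_add, Finset.sum_add_distrib]
      rw [ihm, step_sum n m (by omega) hmn]
      push_cast
      ring

theorem stmt2 (n : ℕ) (hn : 2 ≤ n) (p : ℕ → ℝ)
    (hp : ∀ i, 1 ≤ i → 0 ≤ p i) (hps : HasSum (fun i : ℕ => p (i + 1)) 1)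
    (hsupp : ∀ i, n < i → p i = 0) :
    ∑ l ∈ Finset.Icc 1 n, xdist n l * A p (thresh l) = 1 / (1 + H (n - 1)) := by
  have hlam : ∀ i : ℕ, lam p i = ∑ m ∈ Finset.Icc i n, p m / m := by
    intro i
    rw [lam, tsum_eq_sum (s := Finset.Icc i n) ?_]
    · apply Finset.sum_congr rfl
      intro m hm
      rw [Finset.mem_Icc] at hm
      rw [if_pos hm.1]
    · intro m hm
      rw [Finset.mem_Icc] at hm
      push_neg at hm
      by_cases h : i ≤ m
      · rw [if_pos h, hsupp m (hm h), zero_div]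
      · rw [if_neg h]
  have hA : ∀ l, A p (thresh l) =
      ∑ i ∈ Finset.range n, U (thresh l) i * thresh l (i+1) * lam p (i+1) := by
    intro l
    rw [A, tsum_eq_sum (s := Finset.range n) ?_]
    intro i hi
    rw [Finset.mem_range, not_lt] at hi
    have h0 : lam p (i+1) = 0 := by
      rw [hlam, Finset.Icc_eq_empty (by omega), Finset.sum_empty]
    rw [h0, mul_zero]
  -- rewrite as triple sum
  have step1 : ∑ l ∈ Finset.Icc 1 n, xdist n l * A p (thresh l)
      = ∑ l ∈ Finset.Icc 1 n, ∑ i ∈ Finset.range n, ∑ m ∈ Finset.Icc 1 n,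
          (if i < m then xdist n l * (U (thresh l) i * thresh l (i+1)) * (p m / m) else 0) := by
    apply Finset.sum_congr rfl
    intro l hl
    rw [hA l, Finset.mul_sum]
    apply Finset.sum_congr rfl
    intro i _
    rw [hlam (i+1)]
    have hfil : Finset.Icc (i+1) n = (Finset.Icc 1 n).filter (fun m => i < m) := by
      ext a
      simp only [Finset.mem_Icc, Finset.mem_filter]
      omega
    rw [hfil, Finset.sum_filter, Finset.mul_sum, Finset.mul_sum]
    apply Finset.sum_congr rfl
    intro m _
    by_cases h : i < m
    · rw [if_pos h, if_pos h]; ring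
    · rw [if_neg h, if_neg h]; ring
  rw [step1]
  rw [Finset.sum_comm]
  have step2 : ∀ i ∈ Finset.range n,
      (∑ l ∈ Finset.Icc 1 n, ∑ m ∈ Finset.Icc 1 n,
        (if i < m then xdist n l * (U (thresh l) i * thresh l (i+1)) * (p m / m) else 0))
      = ∑ m ∈ Finset.Icc 1 n, ∑ l ∈ Finset.Icc 1 n,
        (if i < m then xdist n l * (U (thresh l) i * thresh l (i+1)) * (p m / m) else 0) := by
    intro i _
    exact Finset.sum_comm
  rw [Finset.sum_congr rfl step2, Finset.sum_comm]
  -- now outer sum over m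
  have step3 : ∀ m ∈ Finset.Icc 1 n,
      (∑ i ∈ Finset.range n, ∑ l ∈ Finset.Icc 1 n,
        (if i < m then xdist n l * (U (thresh l) i * thresh l (i+1)) * (p m / m) else 0))
      = p m * (1 / (1 + H (n-1))) := by
    intro m hm
    rw [Finset.mem_Icc] at hm
    have hrange : Finset.range m = (Finset.range n).filter (fun i => i < m) := by
      ext a
      simp only [Finset.mem_range, Finset.mem_filter]
      omega
    rw [Finset.sum_comm]
    have inner : ∀ l ∈ Finset.Icc 1 n,
        (∑ i ∈ Finset.range n,
          (if i < m then xdist n l * (U (thresh l) i * thresh l (i+1)) * (p m / m) else 0))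
        = (xdist n l * ∑ i ∈ Finset.range m, U (thresh l) i * thresh l (i+1)) * (p m / m) := by
      intro l _
      rw [hrange, ← Finset.sum_filter, Finset.mul_sum, Finset.sum_mul]
    rw [Finset.sum_congr rfl inner, ← Finset.sum_mul, K_lemma n m hm.1 hm.2]
    have hm0 : (m:ℝ) ≠ 0 := by
      have : (1:ℝ) ≤ (m:ℝ) := by exact_mod_cast hm.1
      linarith
    set c := 1 / (1 + H (n-1)) with hc
    field_simp
  rw [Finset.sum_congr rfl step3, ← Finset.sum_mul]
  have hsum1 : ∑ m ∈ Finset.Icc 1 n, p m = 1 := by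
    have hfin : HasSum (fun i : ℕ => p (i + 1)) (∑ i ∈ Finset.range n, p (i+1)) := by
      apply hasSum_sum_of_ne_finset_zero
      intro i hi
      rw [Finset.mem_range, not_lt] at hi
      exact hsupp (i+1) (by omega)
    have h1 : ∑ i ∈ Finset.range n, p (i+1) = 1 := hfin.unique hps
    rw [← h1,
      show Finset.Icc 1 n = Finset.Ico 1 (n+1) by ext a; simp only [Finset.mem_Icc, Finset.mem_Ico]; omega,
      Finset.sum_Ico_eq_sum_range]
    apply Finset.sum_congr (by norm_num)
    intro i _
    rw [add_comm]
  rw [hsum1, one_mul]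
end

section
/- Let μ̄ ≥ e and set n = ⌈μ̄·log(μ̄)⌉. Define the probability vector x^{(n)} on {1,...,n} by x^{(n)}_1 = 1/(1+H_{n−1}) and x^{(n)}_i = (1/(1+H_{n−1}))/(i−1) for i = 2,...,n. Then for every distribution p on the positive integers whose mean satisfies Σ_{i=1}^∞ i·p_i ≤ μ̄, one has Σ_{l=1}^{n} x^{(n)}_l · A(p, q^{(l)}) ≥ (1/(2 + log(n−1)))·(1 − 1/log(μ̄)). -/
open scoped BigOperators

/-- truncation of `p` to indices `≥ 1` -/
noncomputable def pp (p : ℕ → ℝ) : ℕ → ℝ := fun m => if 1 ≤ m then p m else 0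

lemma pp_nonneg (p : ℕ → ℝ) (hp : ∀ i, 1 ≤ i → 0 ≤ p i) (m : ℕ) : 0 ≤ pp p m := by
  unfold pp; split_ifs with h
  · exact hp m h
  · exact le_refl 0

lemma hasSum_pp (p : ℕ → ℝ) (hps : HasSum (fun i : ℕ => p (i + 1)) 1) : HasSum (pp p) 1 := by
  have h : (fun i : ℕ => pp p (i + 1)) = fun i : ℕ => p (i + 1) := by
    funext i; simp [pp]
  have h2 : HasSum (fun i : ℕ => pp p (i + 1)) 1 := by rw [h]; exact hps
  have h3 := (hasSum_nat_add_iff (f := pp p) 1).mp h2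
  simpa [pp] using h3

lemma summable_pp (p : ℕ → ℝ) (hps : HasSum (fun i : ℕ => p (i + 1)) 1) : Summable (pp p) :=
  (hasSum_pp p hps).summable

lemma lamterm_nonneg (p : ℕ → ℝ) (hp : ∀ i, 1 ≤ i → 0 ≤ p i) (j l : ℕ) :
    0 ≤ if j ≤ l then p l / (l : ℝ) else 0 := by
  split_ifs with h
  · match l with
    | 0 => simp
    | Nat.succ k =>
      exact div_nonneg (hp _ (Nat.succ_le_succ (Nat.zero_le k))) (by positivity)
  · exact le_refl 0

lemma lam_nonneg (p : ℕ → ℝ) (hp : ∀ i, 1 ≤ i → 0 ≤ p i) (j : ℕ) : 0 ≤ lam p j :=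
  tsum_nonneg (lamterm_nonneg p hp j)

lemma summable_lamterm (p : ℕ → ℝ) (hp : ∀ i, 1 ≤ i → 0 ≤ p i)
    (hps : HasSum (fun i : ℕ => p (i + 1)) 1) (j : ℕ) :
    Summable (fun l : ℕ => if j ≤ l then p l / (l : ℝ) else 0) := by
  apply Summable.of_nonneg_of_le (lamterm_nonneg p hp j) _ (summable_pp p hps)
  intro l
  split_ifs with h
  · match l with
    | 0 => simp [pp]
    | Nat.succ k =>
      have h1 : (1:ℕ) ≤ k + 1 := Nat.succ_le_succ (Nat.zero_le k)
      have : p (k+1) / ((k+1 : ℕ) : ℝ) ≤ p (k+1) := by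
        apply div_le_self (hp _ h1)
        exact_mod_cast h1
      simpa [pp] using this
  · exact pp_nonneg p hp l

lemma filter_Icc_eq (N m : ℕ) :
    Finset.filter (fun j => j ≤ m) (Finset.Icc 1 N) = Finset.Icc 1 (min N m) := by
  ext j; simp only [Finset.mem_filter, Finset.mem_Icc]; omega

lemma sum_lam_eq (p : ℕ → ℝ) (hp : ∀ i, 1 ≤ i → 0 ≤ p i)
    (hps : HasSum (fun i : ℕ => p (i + 1)) 1) (N : ℕ) :
    ∑ j ∈ Finset.Icc 1 N, lam p j = ∑' m : ℕ, ((min N m : ℕ) : ℝ) * (pp p m / m) := by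
  unfold lam
  rw [← Summable.tsum_finsetSum (fun j _ => summable_lamterm p hp hps j)]
  apply tsum_congr
  intro m
  rw [← Finset.sum_filter, filter_Icc_eq, Finset.sum_const, Nat.card_Icc]
  match m with
  | 0 => simp
  | Nat.succ k =>
    have : min N (k+1) + 1 - 1 = min N (k+1) := by omega
    rw [this, nsmul_eq_mul]
    simp [pp]

lemma minterm_le (p : ℕ → ℝ) (hp : ∀ i, 1 ≤ i → 0 ≤ p i) (N m : ℕ) :
    ((min N m : ℕ) : ℝ) * (pp p m / m) ≤ pp p m := by
  match m with
  | 0 => simp [pp]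
  | Nat.succ k =>
    have h1 : ((min N (k+1) : ℕ) : ℝ) ≤ ((k+1 : ℕ) : ℝ) := by
      exact_mod_cast Nat.min_le_right N (k+1)
    have h2 : (0:ℝ) ≤ pp p (k+1) / ((k+1:ℕ) : ℝ) := by
      apply div_nonneg (pp_nonneg p hp _) (by positivity)
    calc ((min N (k+1) : ℕ) : ℝ) * (pp p (k+1) / ((k+1:ℕ):ℝ))
        ≤ ((k+1:ℕ):ℝ) * (pp p (k+1) / ((k+1:ℕ):ℝ)) := mul_le_mul_of_nonneg_right h1 h2
      _ = pp p (k+1) := by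
          rw [mul_comm, div_mul_cancel₀]
          positivity

lemma minterm_nonneg (p : ℕ → ℝ) (hp : ∀ i, 1 ≤ i → 0 ≤ p i) (N m : ℕ) :
    0 ≤ ((min N m : ℕ) : ℝ) * (pp p m / m) := by
  apply mul_nonneg (by positivity)
  exact div_nonneg (pp_nonneg p hp m) (by positivity)

lemma summable_minterm (p : ℕ → ℝ) (hp : ∀ i, 1 ≤ i → 0 ≤ p i)
    (hps : HasSum (fun i : ℕ => p (i + 1)) 1) (N : ℕ) :
    Summable (fun m : ℕ => ((min N m : ℕ) : ℝ) * (pp p m / m)) :=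
  Summable.of_nonneg_of_le (minterm_nonneg p hp N) (minterm_le p hp N) (summable_pp p hps)

lemma sum_lam_le_one (p : ℕ → ℝ) (hp : ∀ i, 1 ≤ i → 0 ≤ p i)
    (hps : HasSum (fun i : ℕ => p (i + 1)) 1) (N : ℕ) :
    ∑ j ∈ Finset.Icc 1 N, lam p j ≤ 1 := by
  rw [sum_lam_eq p hp hps N]
  calc ∑' m : ℕ, ((min N m : ℕ) : ℝ) * (pp p m / m) ≤ ∑' m : ℕ, pp p m :=
        Summable.tsum_le_tsum (minterm_le p hp N) (summable_minterm p hp hps N) (summable_pp p hps)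
    _ = 1 := (hasSum_pp p hps).tsum_eq

lemma summable_lam_shift (p : ℕ → ℝ) (hp : ∀ i, 1 ≤ i → 0 ≤ p i)
    (hps : HasSum (fun i : ℕ => p (i + 1)) 1) :
    Summable (fun i : ℕ => lam p (i + 1)) := by
  apply summable_of_sum_range_le (c := 1) (fun i => lam_nonneg p hp (i+1))
  intro K
  have h : ∑ i ∈ Finset.range K, lam p (i + 1) = ∑ j ∈ Finset.Icc 1 K, lam p j := by
    rw [← Finset.Ico_add_one_right_eq_Icc, Finset.sum_Ico_eq_sum_range]
    simp [add_comm]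
  rw [h]
  exact sum_lam_le_one p hp hps K

lemma sum_lam_ge (p : ℕ → ℝ) (μ : ℝ) (hp : ∀ i, 1 ≤ i → 0 ≤ p i)
    (hps : HasSum (fun i : ℕ => p (i + 1)) 1)
    (hsummean : Summable (fun i : ℕ => (i : ℝ) * p i))
    (hmean : ∑' i : ℕ, (i : ℝ) * p i ≤ μ)
    (N : ℕ) (hN : 1 ≤ N) :
    1 - μ / N ≤ ∑ j ∈ Finset.Icc 1 N, lam p j := by
  rw [sum_lam_eq p hp hps N]
  have hNpos : (0:ℝ) < N := by exact_mod_cast hN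
  set S := ∑' i : ℕ, (i : ℝ) * p i with hS
  have hsub : HasSum (fun m : ℕ => pp p m - (m : ℝ) * p m / N) (1 - S / N) :=
    (hasSum_pp p hps).sub (hsummean.hasSum.div_const N)
  have hterm : ∀ m : ℕ, pp p m - (m : ℝ) * p m / N ≤ ((min N m : ℕ) : ℝ) * (pp p m / m) := by
    intro m
    match m with
    | 0 => simp [pp]
    | Nat.succ k =>
      have hk1 : (1:ℝ) ≤ ((k+1:ℕ):ℝ) := by exact_mod_cast Nat.succ_le_succ (Nat.zero_le k)
      have hpk : 0 ≤ p (k+1) := hp _ (Nat.succ_le_succ (Nat.zero_le k))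
      have hppk : pp p (k+1) = p (k+1) := by simp [pp]
      rcases le_or_gt (k+1) N with hcase | hcase
      · have hmin : min N (k+1) = k+1 := by omega
        rw [hmin, hppk]
        have h1 : ((k+1:ℕ):ℝ) * (p (k+1) / ((k+1:ℕ):ℝ)) = p (k+1) := by
          rw [mul_comm, div_mul_cancel₀]
          positivity
        rw [h1]
        have : 0 ≤ ((k+1:ℕ):ℝ) * p (k+1) / N := by positivity
        linarith
      · have hmin : min N (k+1) = N := by omega
        rw [hmin, hppk]
        have hkN : (N:ℝ) ≤ ((k+1:ℕ):ℝ) := by exact_mod_cast hcase.le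
        have h1 : p (k+1) - ((k+1:ℕ):ℝ) * p (k+1) / N ≤ 0 := by
          rw [sub_nonpos, le_div_iff₀ hNpos]
          nlinarith
        have h2 : 0 ≤ (N:ℝ) * (p (k+1) / ((k+1:ℕ):ℝ)) := by positivity
        linarith
  have := Summable.tsum_le_tsum hterm hsub.summable (summable_minterm p hp hps N)
  rw [hsub.tsum_eq] at this
  have hSμ : S / N ≤ μ / N := div_le_div_of_nonneg_right hmean hNpos.le
  linarith

lemma thresh_mem (l i : ℕ) : thresh l i = 0 ∨ thresh l i = 1 := by
  unfold thresh; split_ifs <;> simp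

lemma U_thresh_nonneg (l i : ℕ) : 0 ≤ U (thresh l) i := by
  unfold U
  apply Finset.prod_nonneg
  intro j hj
  have hj1 : 1 ≤ j := (Finset.mem_Icc.mp hj).1
  have hj1' : (1:ℝ) ≤ (j:ℝ) := by exact_mod_cast hj1
  rcases thresh_mem l j with h | h <;> rw [h]
  · simp
  · rw [sub_nonneg]
    exact div_le_one_of_le₀ hj1' (by positivity)

lemma U_thresh_le_one (l i : ℕ) : U (thresh l) i ≤ 1 := by
  unfold U
  apply Finset.prod_le_one
  · intro j hj
    have hj1 : 1 ≤ j := (Finset.mem_Icc.mp hj).1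
    have hj1' : (1:ℝ) ≤ (j:ℝ) := by exact_mod_cast hj1
    rcases thresh_mem l j with h | h <;> rw [h]
    · simp
    · rw [sub_nonneg]
      exact div_le_one_of_le₀ hj1' (by positivity)
  · intro j hj
    have hj1 : 1 ≤ j := (Finset.mem_Icc.mp hj).1
    have hj0 : (0:ℝ) < (j:ℝ) := by exact_mod_cast hj1
    rcases thresh_mem l j with h | h <;> rw [h]
    · simp
    · have : 0 ≤ (1:ℝ) / (j:ℝ) := by positivity
      linarith [this]

lemma U_thresh_of_lt (l i : ℕ) (h : i < l) : U (thresh l) i = 1 := by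
  unfold U
  apply Finset.prod_eq_one
  intro j hj
  have hj2 : j ≤ i := (Finset.mem_Icc.mp hj).2
  have : thresh l j = 0 := by unfold thresh; rw [if_neg]; omega
  rw [this]; simp

lemma U_thresh_one (i : ℕ) (hi : 1 ≤ i) : U (thresh 1) i = 0 := by
  unfold U
  apply Finset.prod_eq_zero (Finset.mem_Icc.mpr ⟨le_refl 1, hi⟩)
  simp [thresh]

lemma U_thresh_eq (l : ℕ) (hl : 2 ≤ l) (i : ℕ) (hi : l - 1 ≤ i) :
    U (thresh l) i = ((l:ℝ) - 1) / (i : ℝ) := by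
  induction i, hi using Nat.le_induction with
  | base =>
    rw [U_thresh_of_lt l (l-1) (by omega)]
    have h1 : (((l - 1 : ℕ)) : ℝ) = (l:ℝ) - 1 := by
      push_cast [Nat.cast_sub (by omega : 1 ≤ l)]; ring
    rw [h1, div_self]
    have : (2:ℝ) ≤ (l:ℝ) := by exact_mod_cast hl
    linarith
  | succ i hi ih =>
    have hi1 : 1 ≤ i := by omega
    have hUstep : U (thresh l) (i+1) = U (thresh l) i * (1 - thresh l (i+1) / ((i+1:ℕ):ℝ)) := by
      unfold U
      rw [Finset.prod_Icc_succ_top (by omega : 1 ≤ i + 1)]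
    have ht : thresh l (i+1) = 1 := by unfold thresh; rw [if_pos (by omega)]
    rw [hUstep, ih, ht]
    have hi0 : ((i:ℕ):ℝ) ≠ 0 := by
      have : (1:ℝ) ≤ (i:ℝ) := by exact_mod_cast hi1
      linarith
    have hi10 : ((i+1:ℕ):ℝ) ≠ 0 := by positivity
    push_cast at hi0 hi10 ⊢
    field_simp
    try ring

lemma xdist_nonneg (n l : ℕ) : 0 ≤ xdist n l := by
  have hH : 0 ≤ H (n-1) := Finset.sum_nonneg (fun i _ => by positivity)
  have hc : 0 ≤ 1 / (1 + H (n-1)) := by positivity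
  unfold xdist
  split_ifs with h1 h2
  · exact hc
  · apply div_nonneg hc
    have : (2:ℝ) ≤ (l:ℝ) := by exact_mod_cast h2.1
    linarith
  · exact le_refl 0

lemma summable_A_term (p : ℕ → ℝ) (hp : ∀ i, 1 ≤ i → 0 ≤ p i)
    (hps : HasSum (fun i : ℕ => p (i + 1)) 1) (l : ℕ) :
    Summable (fun i : ℕ => U (thresh l) i * thresh l (i + 1) * lam p (i + 1)) := by
  apply Summable.of_nonneg_of_le _ _ (summable_lam_shift p hp hps)
  · intro i
    apply mul_nonneg (mul_nonneg (U_thresh_nonneg l i) _) (lam_nonneg p hp _)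
    rcases thresh_mem l (i+1) with h | h <;> rw [h] <;> norm_num
  · intro i
    have h1 : U (thresh l) i * thresh l (i+1) ≤ 1 := by
      rcases thresh_mem l (i+1) with h | h <;> rw [h]
      · simp
      · rw [mul_one]; exact U_thresh_le_one l i
    have h2 : 0 ≤ lam p (i+1) := lam_nonneg p hp _
    calc U (thresh l) i * thresh l (i+1) * lam p (i+1) ≤ 1 * lam p (i+1) :=
          mul_le_mul_of_nonneg_right h1 h2
      _ = lam p (i+1) := one_mul _

lemma key_id (n : ℕ) (hn2 : 2 ≤ n) (i : ℕ) (hi : i < n) :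
    ∑ l ∈ Finset.Icc 1 n, xdist n l * (U (thresh l) i * thresh l (i + 1)) =
      1 / (1 + H (n - 1)) := by
  have hins : Finset.Icc 1 n = insert 1 (Finset.Icc 2 n) := by
    ext j; simp only [Finset.mem_Icc, Finset.mem_insert]; omega
  have hnotmem : (1 : ℕ) ∉ Finset.Icc 2 n := by simp
  rw [hins, Finset.sum_insert hnotmem]
  rcases Nat.eq_zero_or_pos i with rfl | hipos
  · have h1 : xdist n 1 * (U (thresh 1) 0 * thresh 1 1) = 1 / (1 + H (n-1)) := by
      have hU : U (thresh 1) 0 = 1 := by unfold U; simp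
      have ht : thresh 1 1 = 1 := by unfold thresh; simp
      have hx : xdist n 1 = 1 / (1 + H (n-1)) := by unfold xdist; simp
      rw [hU, ht, hx]; ring
    rw [h1, Finset.sum_eq_zero, add_zero]
    intro l hl
    have hl2 : 2 ≤ l := (Finset.mem_Icc.mp hl).1
    have ht : thresh l 1 = 0 := by unfold thresh; rw [if_neg]; omega
    rw [ht]; ring
  · have h1 : U (thresh 1) i = 0 := U_thresh_one i hipos
    rw [h1]
    have hterm : ∀ l ∈ Finset.Icc 2 n, xdist n l * (U (thresh l) i * thresh l (i + 1)) =
        if l ≤ i + 1 then (1 / (1 + H (n-1))) / (i:ℝ) else 0 := by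
      intro l hl
      obtain ⟨hl2, hln⟩ := Finset.mem_Icc.mp hl
      by_cases hle : l ≤ i + 1
      · rw [if_pos hle]
        have ht : thresh l (i+1) = 1 := by unfold thresh; rw [if_pos hle]
        have hU : U (thresh l) i = ((l:ℝ) - 1) / (i:ℝ) := U_thresh_eq l hl2 i (by omega)
        have hx : xdist n l = (1 / (1 + H (n-1))) / ((l:ℝ) - 1) := by
          unfold xdist; rw [if_neg (by omega), if_pos ⟨hl2, hln⟩]
        rw [ht, hU, hx, mul_one]
        have hl0 : ((l:ℝ) - 1) ≠ 0 := by
          have : (2:ℝ) ≤ (l:ℝ) := by exact_mod_cast hl2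
          linarith
        rw [div_mul_div_comm, mul_comm (1 / (1 + H (n-1))) ((l:ℝ) - 1),
          mul_div_mul_left _ _ hl0]
      · rw [if_neg hle]
        have ht : thresh l (i+1) = 0 := by unfold thresh; rw [if_neg hle]
        rw [ht]; ring
    rw [Finset.sum_congr rfl hterm, ← Finset.sum_filter]
    have hfil : Finset.filter (fun l => l ≤ i + 1) (Finset.Icc 2 n) = Finset.Icc 2 (i+1) := by
      ext j; simp only [Finset.mem_filter, Finset.mem_Icc]; omega
    rw [hfil, Finset.sum_const, Nat.card_Icc]
    have hcard : i + 1 + 1 - 2 = i := by omega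
    rw [hcard, nsmul_eq_mul]
    have hi0 : ((i:ℕ):ℝ) ≠ 0 := by
      have : (1:ℝ) ≤ (i:ℝ) := by exact_mod_cast hipos
      linarith
    rw [mul_comm ((i:ℕ):ℝ), div_mul_cancel₀ _ hi0]
    ring

lemma H_eq_harmonic (m : ℕ) : H m = (harmonic m : ℝ) := by
  rw [harmonic_eq_sum_Icc]
  unfold H
  push_cast
  simp [one_div]

theorem stmt3 (μ : ℝ) (hμ : Real.exp 1 ≤ μ)
    (n : ℕ) (hn : n = ⌈μ * Real.log μ⌉₊)
    (p : ℕ → ℝ) (hp : ∀ i, 1 ≤ i → 0 ≤ p i)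
    (hps : HasSum (fun i : ℕ => p (i + 1)) 1)
    (hsummean : Summable (fun i : ℕ => (i : ℝ) * p i))
    (hmean : ∑' i : ℕ, (i : ℝ) * p i ≤ μ) :
    (1 / (2 + Real.log ((n : ℝ) - 1))) * (1 - 1 / Real.log μ) ≤
      ∑ l ∈ Finset.Icc 1 n, xdist n l * A p (thresh l) := by
  have hμpos : (0:ℝ) < μ := lt_of_lt_of_le (Real.exp_pos 1) hμ
  have hlog : 1 ≤ Real.log μ := by
    rw [Real.le_log_iff_exp_le hμpos]; simpa using hμ
  have he2 : (2:ℝ) < Real.exp 1 := by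
    have := Real.exp_one_gt_d9
    linarith
  have hμ2 : (2:ℝ) < μ := lt_of_lt_of_le he2 hμ
  have hnge : μ * Real.log μ ≤ (n : ℝ) := by rw [hn]; exact Nat.le_ceil _
  have hn2r : (2:ℝ) < (n:ℝ) := by nlinarith
  have hn3 : 3 ≤ n := by
    have : 2 < n := by exact_mod_cast hn2r
    omega
  have hnpos : (0:ℝ) < (n:ℝ) := by linarith
  -- Markov
  have hmark : μ / (n:ℝ) ≤ 1 / Real.log μ := by
    rw [div_le_div_iff₀ hnpos (by linarith)]
    linarith [hnge]
  have hA1 : 1 - 1 / Real.log μ ≤ ∑ j ∈ Finset.Icc 1 n, lam p j := by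
    have := sum_lam_ge p μ hp hps hsummean hmean n (by omega)
    linarith
  -- harmonic bound
  have hHle : H (n - 1) ≤ 1 + Real.log ((n:ℝ) - 1) := by
    rw [H_eq_harmonic]
    have := harmonic_le_one_add_log (n - 1)
    have hcast : (((n - 1 : ℕ)) : ℝ) = (n:ℝ) - 1 := by
      push_cast [Nat.cast_sub (by omega : 1 ≤ n)]; ring
    rw [hcast] at this
    exact this
  have hHnn : 0 ≤ H (n - 1) := Finset.sum_nonneg (fun i _ => by positivity)
  have hlognn : 0 ≤ Real.log ((n:ℝ) - 1) := by
    apply Real.log_nonneg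
    linarith
  set c := 1 / (1 + H (n - 1)) with hc
  have hcnn : 0 ≤ c := by rw [hc]; positivity
  have hcge : 1 / (2 + Real.log ((n:ℝ) - 1)) ≤ c := by
    rw [hc]
    apply one_div_le_one_div_of_le (by positivity)
    linarith
  have hfacnn : 0 ≤ 1 - 1 / Real.log μ := by
    rw [sub_nonneg]
    rw [div_le_one (by linarith)]
    exact hlog
  -- main chain
  have hmain : c * ∑ j ∈ Finset.Icc 1 n, lam p j ≤
      ∑ l ∈ Finset.Icc 1 n, xdist n l * A p (thresh l) := by
    have hstep1 : ∀ l ∈ Finset.Icc 1 n,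
        xdist n l * (∑ i ∈ Finset.range n, U (thresh l) i * thresh l (i+1) * lam p (i+1)) ≤
          xdist n l * A p (thresh l) := by
      intro l _
      apply mul_le_mul_of_nonneg_left _ (xdist_nonneg n l)
      unfold A
      apply Summable.sum_le_tsum
      · intro i _
        apply mul_nonneg (mul_nonneg (U_thresh_nonneg l i) _) (lam_nonneg p hp _)
        rcases thresh_mem l (i+1) with h | h <;> rw [h] <;> norm_num
      · exact summable_A_term p hp hps l
    refine le_trans ?_ (Finset.sum_le_sum hstep1)
    have heq : ∑ l ∈ Finset.Icc 1 n,
        xdist n l * (∑ i ∈ Finset.range n, U (thresh l) i * thresh l (i+1) * lam p (i+1)) =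
        c * ∑ j ∈ Finset.Icc 1 n, lam p j := by
      simp_rw [Finset.mul_sum]
      rw [Finset.sum_comm]
      have hinner : ∀ i ∈ Finset.range n,
          ∑ l ∈ Finset.Icc 1 n, xdist n l * (U (thresh l) i * thresh l (i+1) * lam p (i+1)) =
            c * lam p (i+1) := by
        intro i hi
        have hi' : i < n := Finset.mem_range.mp hi
        have h1 : ∀ l ∈ Finset.Icc 1 n,
            xdist n l * (U (thresh l) i * thresh l (i+1) * lam p (i+1)) =
              (xdist n l * (U (thresh l) i * thresh l (i+1))) * lam p (i+1) := by
          intro l _; ring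
        rw [Finset.sum_congr rfl h1, ← Finset.sum_mul, key_id n (by omega) i hi', hc]
      rw [Finset.sum_congr rfl hinner, ← Finset.Ico_add_one_right_eq_Icc, Finset.sum_Ico_eq_sum_range]
      simp [add_comm]
    rw [heq]
  calc (1 / (2 + Real.log ((n : ℝ) - 1))) * (1 - 1 / Real.log μ)
      ≤ c * (1 - 1 / Real.log μ) := mul_le_mul_of_nonneg_right hcge hfacnn
    _ ≤ c * ∑ j ∈ Finset.Icc 1 n, lam p j := mul_le_mul_of_nonneg_left hA1 hcnn
    _ ≤ _ := hmain
end

section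
/- For every distribution p, every strategy q, and every ρ > 1, the blocked distribution p̃ = Block(p,ρ) satisfies |A(p,q) − A(p̃,q)| ≤ ρ − 1. -/
open scoped BigOperators

/-- The index set `I(ρ) = {⌈ρ^l⌉ : l = 0, 1, 2, ...}`. -/
def Iset (ρ : ℝ) : Set ℕ := {m | ∃ l : ℕ, m = ⌈ρ ^ l⌉₊}

/-- `Ienum ρ l = I(ρ, l)`: the `l`-th distinct element of `I(ρ)` (for `l ≥ 1`,
listed in increasing order), with the convention `I(ρ, 0) = 0`. -/
noncomputable def Ienum (ρ : ℝ) : ℕ → ℕ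
  | 0 => 0
  | l + 1 => Nat.nth (· ∈ Iset ρ) l

/-- The blocked distribution `Block(p, ρ)`: it is supported on `I(ρ)`, and
`Block(p,ρ)_{I(ρ,l)} = Σ_{j=I(ρ,l-1)+1}^{I(ρ,l)} p_j`. -/
noncomputable def Block (p : ℕ → ℝ) (ρ : ℝ) (i : ℕ) : ℝ :=
  ∑' l : ℕ, if i = Ienum ρ (l + 1) then ∑ j ∈ Finset.Icc (Ienum ρ l + 1) i, p j else 0

namespace Stmt6Aux

noncomputable def T (q : ℕ → ℝ) (n : ℕ) : ℝ := ∑ i ∈ Finset.range n, U q i * q (i + 1)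

noncomputable def F (q : ℕ → ℝ) (n : ℕ) : ℝ := T q n / n

section Uq
variable {q : ℕ → ℝ} (hq : ∀ i, 1 ≤ i → q i ∈ Set.Icc (0 : ℝ) 1)
include hq

lemma U_nonneg (i : ℕ) : 0 ≤ U q i := by
  apply Finset.prod_nonneg
  intro l hl
  rw [Finset.mem_Icc] at hl
  obtain ⟨h0, h1⟩ := hq l hl.1
  have hl1 : (1 : ℝ) ≤ l := by exact_mod_cast hl.1
  have : q l / l ≤ 1 := by
    rw [div_le_one (by linarith)]
    linarith
  linarith

lemma U_le_one (i : ℕ) : U q i ≤ 1 := by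
  apply Finset.prod_le_one
  · intro l hl
    rw [Finset.mem_Icc] at hl
    obtain ⟨h0, h1⟩ := hq l hl.1
    have hl1 : (1 : ℝ) ≤ l := by exact_mod_cast hl.1
    have : q l / l ≤ 1 := by
      rw [div_le_one (by linarith)]
      linarith
    linarith
  · intro l hl
    rw [Finset.mem_Icc] at hl
    obtain ⟨h0, h1⟩ := hq l hl.1
    have hl1 : (1 : ℝ) ≤ l := by exact_mod_cast hl.1
    have : 0 ≤ q l / l := div_nonneg h0 (by linarith)
    linarith

lemma term_nonneg (i : ℕ) : 0 ≤ U q i * q (i + 1) :=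
  mul_nonneg (U_nonneg hq i) (hq (i + 1) (Nat.le_add_left 1 i)).1

lemma term_le_one (i : ℕ) : U q i * q (i + 1) ≤ 1 :=
  mul_le_one₀ (U_le_one hq i) (hq (i + 1) (Nat.le_add_left 1 i)).1
    (hq (i + 1) (Nat.le_add_left 1 i)).2

lemma T_nonneg (n : ℕ) : 0 ≤ T q n :=
  Finset.sum_nonneg fun i _ => term_nonneg hq i

lemma T_le (n : ℕ) : T q n ≤ n := by
  calc T q n ≤ ∑ _i ∈ Finset.range n, (1 : ℝ) :=
        Finset.sum_le_sum fun i _ => term_le_one hq i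
    _ = n := by simp

lemma T_mono {n m : ℕ} (h : n ≤ m) : T q n ≤ T q m := by
  apply Finset.sum_le_sum_of_subset_of_nonneg
  · exact Finset.range_subset_range.2 h
  · intro i _ _; exact term_nonneg hq i

lemma T_sub_le {n m : ℕ} (h : n ≤ m) : T q m - T q n ≤ (m : ℝ) - n := by
  have h1 : T q m - T q n = ∑ i ∈ Finset.Ico n m, (U q i * q (i + 1)) := by
    rw [Finset.sum_Ico_eq_sub _ h]; rfl
  rw [h1]
  calc ∑ i ∈ Finset.Ico n m, (U q i * q (i + 1)) ≤ ∑ _i ∈ Finset.Ico n m, (1 : ℝ) :=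
        Finset.sum_le_sum fun i _ => term_le_one hq i
    _ = (m : ℝ) - n := by
        rw [Finset.sum_const, Nat.card_Ico, nsmul_eq_mul, mul_one, Nat.cast_sub h]

lemma F_nonneg (n : ℕ) : 0 ≤ F q n := div_nonneg (T_nonneg hq n) (Nat.cast_nonneg n)

lemma F_le_one (n : ℕ) : F q n ≤ 1 := by
  rcases Nat.eq_zero_or_pos n with h | h
  · subst h; simp [F, T]
  · have hn : (0 : ℝ) < n := by exact_mod_cast h
    rw [F, div_le_one hn]
    exact T_le hq n

lemma F_diff {ρ : ℝ} (hρ : 1 < ρ) {n m : ℕ} (hn : 1 ≤ n) (hnm : n ≤ m)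
    (h : (m : ℝ) ≤ ρ * n) : |F q n - F q m| ≤ ρ - 1 := by
  have hn0 : (0 : ℝ) < n := by exact_mod_cast hn
  have hm0 : (0 : ℝ) < m := by exact_mod_cast lt_of_lt_of_le hn hnm
  have hnm' : (n : ℝ) ≤ m := by exact_mod_cast hnm
  have hTn0 := T_nonneg hq n
  have hTnn := T_le hq n
  have hTmono := T_mono hq hnm
  have hTsub := T_sub_le hq hnm
  have g1 : T q n / n - T q m / m ≤ ρ - 1 := by
    rw [div_sub_div _ _ hn0.ne' hm0.ne', div_le_iff₀ (mul_pos hn0 hm0)]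
    nlinarith [mul_nonneg (sub_nonneg.2 hTnn) (sub_nonneg.2 hnm'),
      mul_nonneg (sub_nonneg.2 hTmono) hn0.le,
      mul_nonneg (mul_nonneg (sub_nonneg.2 hρ.le) hn0.le) (sub_nonneg.2 hnm')]
  have g2 : T q m / m - T q n / n ≤ ρ - 1 := by
    rw [div_sub_div _ _ hm0.ne' hn0.ne', div_le_iff₀ (mul_pos hm0 hn0)]
    nlinarith [mul_nonneg hTn0 (sub_nonneg.2 hnm'),
      mul_le_mul_of_nonneg_right hTsub hn0.le,
      mul_le_mul_of_nonneg_right h hn0.le,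
      mul_nonneg (mul_nonneg (sub_nonneg.2 hρ.le) hn0.le) (sub_nonneg.2 hnm')]
  unfold F
  rw [abs_le]
  constructor <;> linarith

end Uq

section IsetL
variable {ρ : ℝ} (hρ : 1 < ρ)

lemma one_mem_Iset : (1 : ℕ) ∈ Iset ρ := ⟨0, by norm_num⟩

lemma one_le_of_mem_Iset (hρ0 : 0 < ρ) {m : ℕ} (hm : m ∈ Iset ρ) : 1 ≤ m := by
  obtain ⟨l, rfl⟩ := hm
  exact Nat.one_le_iff_ne_zero.2 (by positivity)

include hρ

lemma Iset_infinite : (Iset ρ).Infinite := by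
  apply Set.infinite_of_not_bddAbove
  rintro ⟨N, hN⟩
  obtain ⟨l, hl⟩ := pow_unbounded_of_one_lt (N : ℝ) hρ
  have h1 : ⌈ρ ^ l⌉₊ ∈ Iset ρ := ⟨l, rfl⟩
  have h2 : ⌈ρ ^ l⌉₊ ≤ N := hN h1
  have h3 : (ρ : ℝ) ^ l ≤ ⌈ρ ^ l⌉₊ := Nat.le_ceil _
  have h4 : ((⌈ρ ^ l⌉₊ : ℕ) : ℝ) ≤ N := by exact_mod_cast h2
  linarith

lemma Ienum_strictMono : StrictMono (Ienum ρ) := by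
  have hinf : {x | x ∈ Iset ρ}.Infinite := Iset_infinite hρ
  apply strictMono_nat_of_lt_succ
  intro n
  cases n with
  | zero =>
    show 0 < Nat.nth (· ∈ Iset ρ) 0
    have := one_le_of_mem_Iset (by linarith : (0:ℝ) < ρ) (Nat.nth_mem_of_infinite hinf 0)
    omega
  | succ k =>
    exact Nat.nth_strictMono hinf (Nat.lt_succ_self k)

lemma Ienum_one : Ienum ρ 1 = 1 := by
  have hinf : {x | x ∈ Iset ρ}.Infinite := Iset_infinite hρ
  show Nat.nth (· ∈ Iset ρ) 0 = 1
  rw [Nat.nth_zero]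
  apply le_antisymm
  · exact Nat.sInf_le one_mem_Iset
  · have := Nat.sInf_mem (Set.Infinite.nonempty hinf)
    exact one_le_of_mem_Iset (by linarith : (0:ℝ) < ρ) this

lemma Ienum_succ_le (k : ℕ) : (Ienum ρ (k + 1) : ℝ) ≤ ρ * (Ienum ρ k + 1) := by
  classical
  have hρ0 : (0 : ℝ) < ρ := by linarith
  have hinf : {x | x ∈ Iset ρ}.Infinite := Iset_infinite hρ
  cases k with
  | zero =>
    rw [Ienum_one hρ]
    show ((1:ℕ) : ℝ) ≤ ρ * (((Ienum ρ 0 : ℕ) : ℝ) + 1)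
    simp only [Ienum]
    push_cast
    linarith
  | succ k =>
    set m := Nat.nth (· ∈ Iset ρ) (k + 1) with hmdef
    have hm : m ∈ Iset ρ := Nat.nth_mem_of_infinite hinf (k + 1)
    have hex : ∃ a, m = ⌈ρ ^ a⌉₊ := hm
    set a := Nat.find hex with hadef
    have ha : m = ⌈ρ ^ a⌉₊ := Nat.find_spec hex
    have ha0 : a ≠ 0 := by
      intro h0
      rw [h0] at ha
      norm_num at ha
      have h1 : Nat.nth (· ∈ Iset ρ) 0 < m := Nat.nth_strictMono hinf (Nat.succ_pos k)
      have h2 : 1 ≤ Nat.nth (· ∈ Iset ρ) 0 :=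
        one_le_of_mem_Iset hρ0 (Nat.nth_mem_of_infinite hinf 0)
      omega
    obtain ⟨b, hb⟩ := Nat.exists_eq_succ_of_ne_zero ha0
    have hm' : (⌈ρ ^ b⌉₊ : ℕ) ∈ Iset ρ := ⟨b, rfl⟩
    have hlt : ⌈ρ ^ b⌉₊ < m := by
      have hle : ⌈ρ ^ b⌉₊ ≤ m := by
        rw [ha, hb]
        exact Nat.ceil_le_ceil (pow_le_pow_right₀ (by linarith) (Nat.le_succ b))
      rcases lt_or_eq_of_le hle with h | h
      · exact h
      · exfalso
        exact Nat.find_min hex (by omega : b < a) h.symm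
    have hcount : Nat.nth (· ∈ Iset ρ) (Nat.count (· ∈ Iset ρ) ⌈ρ ^ b⌉₊) = ⌈ρ ^ b⌉₊ :=
      Nat.nth_count hm'
    have hcle : Nat.count (· ∈ Iset ρ) ⌈ρ ^ b⌉₊ ≤ k := by
      by_contra hcon
      push_neg at hcon
      have h5 : m ≤ ⌈ρ ^ b⌉₊ := by
        calc m = Nat.nth (· ∈ Iset ρ) (k + 1) := hmdef
          _ ≤ Nat.nth (· ∈ Iset ρ) (Nat.count (· ∈ Iset ρ) ⌈ρ ^ b⌉₊) :=
              (Nat.nth_strictMono hinf).monotone hcon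
          _ = ⌈ρ ^ b⌉₊ := hcount
      omega
    have hle2 : ⌈ρ ^ b⌉₊ ≤ Nat.nth (· ∈ Iset ρ) k := by
      rw [← hcount]
      exact (Nat.nth_strictMono hinf).monotone hcle
    have h1 : (m : ℝ) < ρ ^ a + 1 := by
      rw [ha]
      exact Nat.ceil_lt_add_one (by positivity)
    have h2 : (ρ : ℝ) ^ b ≤ (⌈ρ ^ b⌉₊ : ℝ) := Nat.le_ceil _
    have h3 : ((⌈ρ ^ b⌉₊ : ℕ) : ℝ) ≤ (Nat.nth (· ∈ Iset ρ) k : ℝ) := by exact_mod_cast hle2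
    show (m : ℝ) ≤ ρ * (Nat.nth (· ∈ Iset ρ) k + 1)
    have h4 : (ρ : ℝ) ^ a = ρ * ρ ^ b := by rw [hb, pow_succ]; ring
    nlinarith

end IsetL

section BlockL
variable {ρ : ℝ} (hρ : 1 < ρ) (p : ℕ → ℝ)
include hρ

lemma Ienum_succ_inj : Function.Injective (fun k : ℕ => Ienum ρ (k + 1)) :=
  fun a b h => by
    have := (Ienum_strictMono hρ).injective (a₁ := a + 1) (a₂ := b + 1) h
    omega

lemma Block_apply (k : ℕ) :
    Block p ρ (Ienum ρ (k + 1)) =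
      ∑ j ∈ Finset.Icc (Ienum ρ k + 1) (Ienum ρ (k + 1)), p j := by
  unfold Block
  rw [tsum_eq_single k]
  · rw [if_pos rfl]
  · intro l hl
    rw [if_neg]
    intro h
    exact hl (Ienum_succ_inj hρ h.symm)

lemma Block_eq_zero {n : ℕ} (h : ∀ k, n ≠ Ienum ρ (k + 1)) : Block p ρ n = 0 := by
  unfold Block
  have : ∀ l : ℕ, (if n = Ienum ρ (l + 1) then ∑ j ∈ Finset.Icc (Ienum ρ l + 1) n, p j else 0) = 0 :=
    fun l => if_neg (h l)
  simp only [this, tsum_zero]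

lemma exists_le_Ienum (j : ℕ) : ∃ k, j ≤ Ienum ρ (k + 1) :=
  ⟨j, le_trans (Nat.le_succ j) ((Ienum_strictMono hρ).le_apply)⟩

noncomputable def bk (hρ : 1 < ρ) (j : ℕ) : ℕ := Nat.find (exists_le_Ienum hρ j)

lemma bk_spec (j : ℕ) : j ≤ Ienum ρ (bk hρ j + 1) := Nat.find_spec (exists_le_Ienum hρ j)

lemma bk_lt {j : ℕ} (hj : 1 ≤ j) : Ienum ρ (bk hρ j) < j := by
  rcases Nat.eq_zero_or_pos (bk hρ j) with h | h
  · rw [h]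
    show Ienum ρ 0 < j
    have h0 : Ienum ρ 0 = 0 := rfl
    omega
  · obtain ⟨k, hk⟩ := Nat.exists_eq_succ_of_ne_zero (Nat.pos_iff_ne_zero.1 h)
    have := Nat.find_min (exists_le_Ienum hρ j) (by omega : k < bk hρ j)
    push_neg at this
    rw [hk]
    exact this

lemma bk_eq {j k : ℕ} (h1 : Ienum ρ k + 1 ≤ j) (h2 : j ≤ Ienum ρ (k + 1)) :
    bk hρ j = k := by
  apply le_antisymm
  · exact Nat.find_le h2
  · by_contra hcon
    push_neg at hcon
    have h3 : bk hρ j + 1 ≤ k := hcon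
    have h4 : Ienum ρ (bk hρ j + 1) ≤ Ienum ρ k := (Ienum_strictMono hρ).monotone h3
    have h5 := bk_spec hρ j
    omega

end BlockL

section Regroup
variable {ρ : ℝ}

lemma regroup (hρ : 1 < ρ) (h : ℕ → ℝ) (hh : ∀ j, 1 ≤ j → 0 ≤ h j)
    (hsum : Summable fun j => h (j + 1)) :
    HasSum (fun k => ∑ j ∈ Finset.Icc (Ienum ρ k + 1) (Ienum ρ (k + 1)), h j)
      (∑' j, h (j + 1)) := by
  have hnonneg : ∀ k, 0 ≤ ∑ j ∈ Finset.Icc (Ienum ρ k + 1) (Ienum ρ (k + 1)), h j := by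
    intro k
    apply Finset.sum_nonneg
    intro j hj
    rw [Finset.mem_Icc] at hj
    exact hh j (by omega)
  rw [hasSum_iff_tendsto_nat_of_nonneg hnonneg]
  have key : ∀ K, ∑ k ∈ Finset.range K,
      (∑ j ∈ Finset.Icc (Ienum ρ k + 1) (Ienum ρ (k + 1)), h j)
      = ∑ j ∈ Finset.range (Ienum ρ K), h (j + 1) := by
    intro K
    induction K with
    | zero => simp [Ienum]
    | succ K ih =>
      rw [Finset.sum_range_succ, ih]
      have hle : Ienum ρ K ≤ Ienum ρ (K + 1) := (Ienum_strictMono hρ).monotone (Nat.le_succ K)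
      rw [Finset.range_eq_Ico, Finset.range_eq_Ico, ← Finset.sum_Ico_consecutive _ (Nat.zero_le (Ienum ρ K)) hle]
      congr 1
      rw [← Finset.Ico_add_one_right_eq_Icc, Finset.sum_Ico_eq_sum_range, Finset.sum_Ico_eq_sum_range]
      have heq : Ienum ρ (K + 1) + 1 - (Ienum ρ K + 1) = Ienum ρ (K + 1) - Ienum ρ K := by omega
      rw [heq]
      apply Finset.sum_congr rfl
      intro i _
      congr 1
      omega
  have h1 : Filter.Tendsto (fun K => ∑ j ∈ Finset.range K, h (j + 1)) Filter.atTop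
      (nhds (∑' j, h (j + 1))) := hsum.hasSum.tendsto_sum_nat
  have h2 : Filter.Tendsto (fun K => Ienum ρ K) Filter.atTop Filter.atTop :=
    Filter.tendsto_atTop_mono (fun K => (Ienum_strictMono hρ).le_apply) Filter.tendsto_id
  simp only [key]
  exact h1.comp h2

end Regroup

section ArepS
variable {q : ℕ → ℝ} (hq : ∀ i, 1 ≤ i → q i ∈ Set.Icc (0 : ℝ) 1)
include hq

lemma Arep (r : ℕ → ℝ) (hr : ∀ l, 0 ≤ r (l + 1)) (hrs : Summable fun l => r (l + 1)) :
    A r q = ∑' l : ℕ, r (l + 1) * F q (l + 1) := by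
  classical
  set c : ℕ → ℝ := fun i => U q i * q (i + 1) with hc
  set f : ℕ → ℕ → ℝ := fun i l =>
    if i ≤ l then c i * (r (l + 1) / ((l + 1 : ℕ) : ℝ)) else 0 with hf
  have hc0 : ∀ i, 0 ≤ c i := term_nonneg hq
  have hc1 : ∀ i, c i ≤ 1 := term_le_one hq
  have hcast : ∀ l : ℕ, (1 : ℝ) ≤ ((l + 1 : ℕ) : ℝ) := by
    intro l; exact_mod_cast Nat.one_le_iff_ne_zero.2 (Nat.succ_ne_zero l)
  have hrdiv0 : ∀ l : ℕ, 0 ≤ r (l + 1) / ((l + 1 : ℕ) : ℝ) := fun l =>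
    div_nonneg (hr l) (by linarith [hcast l])
  have hrdiv : ∀ l : ℕ, r (l + 1) / ((l + 1 : ℕ) : ℝ) ≤ r (l + 1) := fun l =>
    div_le_self (hr l) (hcast l)
  have hf0 : ∀ i l, 0 ≤ f i l := by
    intro i l
    simp only [hf]
    split_ifs
    · exact mul_nonneg (hc0 i) (hrdiv0 l)
    · exact le_refl 0
  have hfle : ∀ i l, f i l ≤ r (l + 1) := by
    intro i l
    simp only [hf]
    split_ifs
    · calc c i * (r (l + 1) / ((l + 1 : ℕ) : ℝ)) ≤ 1 * (r (l + 1) / ((l + 1 : ℕ) : ℝ)) :=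
            mul_le_mul_of_nonneg_right (hc1 i) (hrdiv0 l)
        _ = r (l + 1) / ((l + 1 : ℕ) : ℝ) := one_mul _
        _ ≤ r (l + 1) := hrdiv l
    · exact hr l
  have hfiber : ∀ i, Summable (f i) := fun i =>
    Summable.of_nonneg_of_le (fun l => hf0 i l) (fun l => hfle i l) hrs
  have hcol : ∀ l, Summable (fun i => f i l) := by
    intro l
    apply summable_of_ne_finset_zero (s := Finset.range (l + 1))
    intro i hi
    rw [Finset.mem_range] at hi
    exact if_neg (by omega)
  have hTsum : ∀ l : ℕ, ∑ i ∈ Finset.range (l + 1), f i l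
      = T q (l + 1) * (r (l + 1) / ((l + 1 : ℕ) : ℝ)) := by
    intro l
    rw [T, Finset.sum_mul]
    apply Finset.sum_congr rfl
    intro i hi
    rw [Finset.mem_range] at hi
    rw [hf]
    simp only
    rw [if_pos (by omega : i ≤ l), hc]
  have hinner : ∀ (l : ℕ) (s : Finset ℕ), ∑ i ∈ s, f i l ≤ r (l + 1) := by
    intro l s
    have h1 : ∑ i ∈ s, f i l ≤ ∑ i ∈ s ∪ Finset.range (l + 1), f i l :=
      Finset.sum_le_sum_of_subset_of_nonneg Finset.subset_union_left
        (fun i _ _ => hf0 i l)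
    have h2 : ∑ i ∈ Finset.range (l + 1), f i l = ∑ i ∈ s ∪ Finset.range (l + 1), f i l := by
      apply Finset.sum_subset Finset.subset_union_right
      intro i _ hi
      rw [Finset.mem_range] at hi
      exact if_neg (by omega)
    calc ∑ i ∈ s, f i l ≤ ∑ i ∈ s ∪ Finset.range (l + 1), f i l := h1
      _ = ∑ i ∈ Finset.range (l + 1), f i l := h2.symm
      _ = T q (l + 1) * (r (l + 1) / ((l + 1 : ℕ) : ℝ)) := hTsum l
      _ ≤ ((l + 1 : ℕ) : ℝ) * (r (l + 1) / ((l + 1 : ℕ) : ℝ)) :=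
          mul_le_mul_of_nonneg_right (T_le hq (l + 1)) (hrdiv0 l)
      _ = r (l + 1) := mul_div_cancel₀ _ (by linarith [hcast l])
  have huncurry : Summable (Function.uncurry f) := by
    apply summable_of_sum_le (c := ∑' l, r (l + 1))
    · intro x
      exact hf0 x.1 x.2
    · intro u
      calc ∑ x ∈ u, Function.uncurry f x
          ≤ ∑ x ∈ (u.image Prod.fst) ×ˢ (u.image Prod.snd), Function.uncurry f x :=
            Finset.sum_le_sum_of_subset_of_nonneg Finset.subset_product
              (fun x _ _ => hf0 x.1 x.2)
        _ = ∑ l ∈ u.image Prod.snd, ∑ i ∈ u.image Prod.fst, f i l := by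
            rw [Finset.sum_product_right]; rfl
        _ ≤ ∑ l ∈ u.image Prod.snd, r (l + 1) :=
            Finset.sum_le_sum (fun l _ => hinner l _)
        _ ≤ ∑' l, r (l + 1) := Summable.sum_le_tsum _ (fun l _ => hr l) hrs
  have step1 : ∀ i, U q i * q (i + 1) * lam r (i + 1) = ∑' l, f i l := by
    intro i
    have hg : Summable (fun l => if i + 1 ≤ l then r l / (l : ℝ) else 0) := by
      rw [← summable_nat_add_iff 1]
      apply Summable.of_nonneg_of_le _ _ hrs
      · intro l
        split_ifs
        · exact div_nonneg (hr l) (Nat.cast_nonneg _)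
        · exact le_refl 0
      · intro l
        split_ifs
        · exact hrdiv l
        · exact hr l
    have h0 : lam r (i + 1)
        = ∑' l : ℕ, (if i + 1 ≤ l + 1 then r (l + 1) / ((l + 1 : ℕ) : ℝ) else 0) := by
      rw [lam, Summable.tsum_eq_zero_add hg]
      norm_num
    rw [h0, ← tsum_mul_left]
    apply tsum_congr
    intro l
    simp only [hf, hc]
    by_cases hil : i ≤ l
    · rw [if_pos hil, if_pos (show i + 1 ≤ l + 1 by omega)]
    · rw [if_neg hil, if_neg (show ¬ i + 1 ≤ l + 1 by omega), mul_zero]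
  have step2 : ∀ l, ∑' i, f i l = r (l + 1) * F q (l + 1) := by
    intro l
    have hz : ∀ i ∉ Finset.range (l + 1), f i l = 0 := by
      intro i hi
      rw [Finset.mem_range] at hi
      exact if_neg (by omega)
    rw [tsum_eq_sum hz, hTsum l, F]
    push_cast
    ring
  calc A r q = ∑' i, ∑' l, f i l := tsum_congr step1
    _ = ∑' l, ∑' i, f i l := (Summable.tsum_comm' huncurry hfiber hcol).symm
    _ = ∑' l, r (l + 1) * F q (l + 1) := tsum_congr step2

end ArepS

end Stmt6Aux

theorem stmt6 (p : ℕ → ℝ) (hp : ∀ i, 1 ≤ i → 0 ≤ p i)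
    (hps : HasSum (fun i : ℕ => p (i + 1)) 1)
    (q : ℕ → ℝ) (hq : ∀ i, 1 ≤ i → q i ∈ Set.Icc (0 : ℝ) 1)
    (ρ : ℝ) (hρ : 1 < ρ) :
    |A p q - A (Block p ρ) q| ≤ ρ - 1 := by
  classical
  have hsum_p : Summable (fun j => p (j + 1)) := hps.summable
  have hp' : ∀ j, 0 ≤ p (j + 1) := fun j => hp _ (Nat.le_add_left 1 j)
  have hF0 : ∀ n, 0 ≤ Stmt6Aux.F q n := Stmt6Aux.F_nonneg hq
  have hF1 : ∀ n, Stmt6Aux.F q n ≤ 1 := Stmt6Aux.F_le_one hq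
  set M : ℕ → ℕ := fun j => Ienum ρ (Stmt6Aux.bk hρ j + 1) with hM
  have hM_ge : ∀ j, j ≤ M j := fun j => Stmt6Aux.bk_spec hρ j
  have hM_le : ∀ j, 1 ≤ j → (M j : ℝ) ≤ ρ * j := by
    intro j hj
    have h1 := Stmt6Aux.Ienum_succ_le hρ (Stmt6Aux.bk hρ j)
    have h2 : Ienum ρ (Stmt6Aux.bk hρ j) < j := Stmt6Aux.bk_lt hρ hj
    have h3 : (Ienum ρ (Stmt6Aux.bk hρ j) : ℝ) + 1 ≤ (j : ℝ) := by exact_mod_cast h2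
    calc (M j : ℝ) ≤ ρ * (Ienum ρ (Stmt6Aux.bk hρ j) + 1) := h1
      _ ≤ ρ * j := mul_le_mul_of_nonneg_left h3 (by linarith)
  have hFb : ∀ n, 1 ≤ n → |Stmt6Aux.F q n - Stmt6Aux.F q (M n)| ≤ ρ - 1 :=
    fun n hn => Stmt6Aux.F_diff hq hρ hn (hM_ge n) (hM_le n hn)
  have hA1 : A p q = ∑' l, p (l + 1) * Stmt6Aux.F q (l + 1) := Stmt6Aux.Arep hq p hp' hsum_p
  set B : ℕ → ℝ := fun k => ∑ j ∈ Finset.Icc (Ienum ρ k + 1) (Ienum ρ (k + 1)), p j with hB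
  have hBsum : HasSum B (∑' j, p (j + 1)) := Stmt6Aux.regroup hρ p (fun j hj => hp j hj) hsum_p
  have hbdef : ∀ k, Block p ρ (Ienum ρ (k + 1)) = B k := Stmt6Aux.Block_apply hρ p
  have hinj : Function.Injective (fun k : ℕ => Ienum ρ (k + 1)) := Stmt6Aux.Ienum_succ_inj hρ
  have hpos : ∀ k, 1 ≤ Ienum ρ (k + 1) := by
    intro k
    have h := Stmt6Aux.Ienum_strictMono hρ (show 0 < k + 1 by omega)
    have h0 : Ienum ρ 0 = 0 := rfl
    omega
  set φ : ℕ → ℕ := fun k => Ienum ρ (k + 1) - 1 with hφdef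
  have hφ : ∀ k, φ k + 1 = Ienum ρ (k + 1) := fun k => by
    have := hpos k
    simp only [hφdef]
    omega
  have hφinj : Function.Injective φ := by
    intro a b hab
    apply hinj
    have ha := hφ a
    have hb := hφ b
    simp only [hφdef] at hab
    show Ienum ρ (a + 1) = Ienum ρ (b + 1)
    omega
  have hoff : ∀ l, l ∉ Set.range φ → Block p ρ (l + 1) = 0 := by
    intro l hl
    apply Stmt6Aux.Block_eq_zero hρ p
    intro k hk
    apply hl
    refine ⟨k, ?_⟩
    have := hφ k
    omega
  have hBsummable : Summable B := hBsum.summable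
  have hBlock_summ : Summable (fun l => Block p ρ (l + 1)) := by
    have h1 : Summable ((fun l => Block p ρ (l + 1)) ∘ φ) := by
      have hcomp : ((fun l => Block p ρ (l + 1)) ∘ φ) = B := by
        funext k
        simp only [Function.comp_apply]
        rw [hφ k, hbdef k]
      rw [hcomp]
      exact hBsummable
    exact (hφinj.summable_iff hoff).1 h1
  have hBlock_nonneg : ∀ l, 0 ≤ Block p ρ (l + 1) := by
    intro l
    by_cases hmem : ∃ k, l + 1 = Ienum ρ (k + 1)
    · obtain ⟨k, hk⟩ := hmem
      rw [hk, hbdef k]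
      apply Finset.sum_nonneg
      intro j hj
      rw [Finset.mem_Icc] at hj
      exact hp j (by omega)
    · push_neg at hmem
      rw [Stmt6Aux.Block_eq_zero hρ p hmem]
  have hA2 : A (Block p ρ) q = ∑' l, Block p ρ (l + 1) * Stmt6Aux.F q (l + 1) :=
    Stmt6Aux.Arep hq _ hBlock_nonneg hBlock_summ
  have hsupp : Function.support (fun l => Block p ρ (l + 1) * Stmt6Aux.F q (l + 1))
      ⊆ Set.range φ := by
    rw [Function.support_subset_iff']
    intro l hl
    rw [hoff l hl, zero_mul]
  have hreindex : ∑' l, Block p ρ (l + 1) * Stmt6Aux.F q (l + 1)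
      = ∑' k, B k * Stmt6Aux.F q (Ienum ρ (k + 1)) := by
    rw [← hφinj.tsum_eq hsupp]
    apply tsum_congr
    intro k
    rw [hφ k, hbdef k]
  have hMblock : ∀ k j, j ∈ Finset.Icc (Ienum ρ k + 1) (Ienum ρ (k + 1)) →
      M j = Ienum ρ (k + 1) := by
    intro k j hj
    rw [Finset.mem_Icc] at hj
    simp only [hM]
    rw [Stmt6Aux.bk_eq hρ hj.1 hj.2]
  have hsum2 : Summable (fun j => p (j + 1) * Stmt6Aux.F q (M (j + 1))) :=
    Summable.of_nonneg_of_le (fun j => mul_nonneg (hp' j) (hF0 _))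
      (fun j => mul_le_of_le_one_right (hp' j) (hF1 _)) hsum_p
  have hregroup2 : HasSum
      (fun k => ∑ j ∈ Finset.Icc (Ienum ρ k + 1) (Ienum ρ (k + 1)), p j * Stmt6Aux.F q (M j))
      (∑' j, p (j + 1) * Stmt6Aux.F q (M (j + 1))) :=
    Stmt6Aux.regroup hρ _ (fun j hj => mul_nonneg (hp j hj) (hF0 _)) hsum2
  have hblocksum2 : ∀ k,
      ∑ j ∈ Finset.Icc (Ienum ρ k + 1) (Ienum ρ (k + 1)), p j * Stmt6Aux.F q (M j)
      = B k * Stmt6Aux.F q (Ienum ρ (k + 1)) := by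
    intro k
    rw [hB]
    simp only
    rw [Finset.sum_mul]
    apply Finset.sum_congr rfl
    intro j hj
    rw [hMblock k j hj]
  have hA2' : A (Block p ρ) q = ∑' j, p (j + 1) * Stmt6Aux.F q (M (j + 1)) := by
    rw [hA2, hreindex]
    have h := hregroup2
    rw [show (fun k => ∑ j ∈ Finset.Icc (Ienum ρ k + 1) (Ienum ρ (k + 1)),
        p j * Stmt6Aux.F q (M j)) = fun k => B k * Stmt6Aux.F q (Ienum ρ (k + 1))
      from funext hblocksum2] at h
    exact h.tsum_eq
  have hsum1 : Summable (fun j => p (j + 1) * Stmt6Aux.F q (j + 1)) :=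
    Summable.of_nonneg_of_le (fun j => mul_nonneg (hp' j) (hF0 _))
      (fun j => mul_le_of_le_one_right (hp' j) (hF1 _)) hsum_p
  rw [hA1, hA2', ← Summable.tsum_sub hsum1 hsum2]
  have habs : ∀ j, |p (j + 1) * Stmt6Aux.F q (j + 1) - p (j + 1) * Stmt6Aux.F q (M (j + 1))|
      ≤ p (j + 1) * (ρ - 1) := by
    intro j
    rw [← mul_sub, abs_mul, abs_of_nonneg (hp' j)]
    exact mul_le_mul_of_nonneg_left (hFb (j + 1) (Nat.le_add_left 1 j)) (hp' j)
  have hsabs : Summable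
      (fun j => |p (j + 1) * Stmt6Aux.F q (j + 1) - p (j + 1) * Stmt6Aux.F q (M (j + 1))|) :=
    Summable.of_nonneg_of_le (fun j => abs_nonneg _) habs (hsum_p.mul_right (ρ - 1))
  calc |∑' j, (p (j + 1) * Stmt6Aux.F q (j + 1) - p (j + 1) * Stmt6Aux.F q (M (j + 1)))|
      ≤ ∑' j, |p (j + 1) * Stmt6Aux.F q (j + 1) - p (j + 1) * Stmt6Aux.F q (M (j + 1))| := by
        have h := norm_tsum_le_tsum_norm
          (f := fun j => p (j + 1) * Stmt6Aux.F q (j + 1) - p (j + 1) * Stmt6Aux.F q (M (j + 1)))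
          (by simpa [Real.norm_eq_abs] using hsabs)
        simpa [Real.norm_eq_abs] using h
    _ ≤ ∑' j, p (j + 1) * (ρ - 1) := Summable.tsum_le_tsum habs hsabs (hsum_p.mul_right _)
    _ = (∑' j, p (j + 1)) * (ρ - 1) := tsum_mul_right
    _ = ρ - 1 := by rw [hps.tsum_eq, one_mul]
end

section
/- Let p be a distribution, ε > 0, and n ∈ ℕ such that i·λ_i(p) ≤ ε for all i ≥ n+1. Let G ∈ [0,1]^n satisfy |G_i − i·λ_i(p)| ≤ ε for all i ∈ {1,...,n}. Then for every strategy q, |A(p,q) − Σ_{i=1}^{n} U_{i−1}(q)·(q_i/i)·G_i| ≤ ε. -/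
open scoped BigOperators

theorem stmt7 (p : ℕ → ℝ) (hp : ∀ i, 1 ≤ i → 0 ≤ p i)
    (hps : HasSum (fun i : ℕ => p (i + 1)) 1)
    (ε : ℝ) (hε : 0 < ε) (n : ℕ)
    (htail : ∀ i, n + 1 ≤ i → (i : ℝ) * lam p i ≤ ε)
    (G : ℕ → ℝ) (hG01 : ∀ i, 1 ≤ i → i ≤ n → G i ∈ Set.Icc (0 : ℝ) 1)
    (hG : ∀ i, 1 ≤ i → i ≤ n → |G i - (i : ℝ) * lam p i| ≤ ε)
    (q : ℕ → ℝ) (hq : ∀ i, 1 ≤ i → q i ∈ Set.Icc (0 : ℝ) 1) :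
    |A p q - ∑ i ∈ Finset.Icc 1 n, U q (i - 1) * (q i / (i : ℝ)) * G i| ≤ ε := by
  classical
  set d : ℕ → ℝ := fun j => U q j - U q (j + 1) with hd_def
  have hql : ∀ l : ℕ, 1 ≤ l → q l / (l : ℝ) ∈ Set.Icc (0 : ℝ) 1 := by
    intro l hl
    obtain ⟨h0, h1⟩ := hq l hl
    have hlpos : (0 : ℝ) < l := by exact_mod_cast hl
    constructor
    · positivity
    · rw [div_le_one hlpos]
      exact h1.trans (by exact_mod_cast hl)
  have hU0 : ∀ j, 0 ≤ U q j := by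
    intro j
    apply Finset.prod_nonneg
    intro l hl
    have := (hql l (Finset.mem_Icc.mp hl).1).2
    linarith
  have hU1 : ∀ j, U q j ≤ 1 := by
    intro j
    apply Finset.prod_le_one
    · intro l hl
      have := (hql l (Finset.mem_Icc.mp hl).1).2
      linarith
    · intro l hl
      have := (hql l (Finset.mem_Icc.mp hl).1).1
      linarith
  have hUzero : U q 0 = 1 := by
    simp [U, Finset.Icc_eq_empty (by omega : ¬ (1 : ℕ) ≤ 0)]
  have hUsucc : ∀ j, U q (j + 1) = U q j * (1 - q (j + 1) / ((j : ℝ) + 1)) := by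
    intro j
    unfold U
    rw [Finset.prod_Icc_succ_top (by omega : 1 ≤ j + 1)]
    push_cast
    ring
  have hdeq : ∀ j, d j = U q j * (q (j + 1) / ((j : ℝ) + 1)) := by
    intro j
    simp only [hd_def, hUsucc j]
    ring
  have hd0 : ∀ j, 0 ≤ d j := by
    intro j
    rw [hdeq]
    have h1 := (hql (j + 1) (by omega)).1
    push_cast at h1
    exact mul_nonneg (hU0 j) h1
  have hdpart : ∀ N, ∑ j ∈ Finset.range N, d j = 1 - U q N := by
    intro N
    have := Finset.sum_range_sub' (f := U q) (n := N)
    simp only [hd_def]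
    rw [this, hUzero]
  have hdsm : Summable d := by
    apply summable_of_sum_range_le hd0
    intro N
    rw [hdpart]
    linarith [hU0 N]
  have hdtsum : (∑' j, d j) ≤ 1 := by
    apply Real.tsum_le_of_sum_range_le hd0
    intro N
    rw [hdpart]
    linarith [hU0 N]
  have hlamnn : ∀ i, 1 ≤ i → 0 ≤ lam p i := by
    intro i hi
    apply tsum_nonneg
    intro l
    by_cases h : i ≤ l
    · simp only [h, if_true]
      have hl1 : 1 ≤ l := le_trans hi h
      have : (0 : ℝ) < l := by exact_mod_cast hl1
      exact div_nonneg (hp l hl1) this.le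
    · simp [h]
  have hgb : ∀ j : ℕ, 1 ≤ j → (j : ℝ) * lam p j ≤ 1 + ε := by
    intro j hj
    by_cases hjn : j ≤ n
    · have h1 := hG j hj hjn
      have h2 := (hG01 j hj hjn).2
      have := abs_le.mp h1
      linarith [this.1]
    · have := htail j (by omega)
      linarith
  set f : ℕ → ℝ := fun j => U q j * q (j + 1) * lam p (j + 1) with hf_def
  have hfeq : ∀ j, f j = d j * (((j : ℝ) + 1) * lam p (j + 1)) := by
    intro j
    rw [hdeq]
    have : ((j : ℝ) + 1) ≠ 0 := by positivity
    field_simp [hf_def]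
    ring
  have hf0 : ∀ j, 0 ≤ f j := by
    intro j
    have h1 := (hq (j + 1) (by omega)).1
    have h2 := hlamnn (j + 1) (by omega)
    push_cast at h2 ⊢
    exact mul_nonneg (mul_nonneg (hU0 j) h1) h2
  have hfle : ∀ j, f j ≤ (1 + ε) * d j := by
    intro j
    rw [hfeq]
    have hg := hgb (j + 1) (by omega)
    push_cast at hg
    calc d j * (((j : ℝ) + 1) * lam p (j + 1)) ≤ d j * (1 + ε) :=
          mul_le_mul_of_nonneg_left hg (hd0 j)
      _ = (1 + ε) * d j := by ring
  have hfsm : Summable f :=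
    Summable.of_nonneg_of_le hf0 hfle (hdsm.mul_left (1 + ε))
  set χ : ℕ → ℝ := fun j => if j < n then d j * G (j + 1) else 0 with hχ_def
  have hχ0 : ∀ j ∉ Finset.range n, χ j = 0 := by
    intro j hj
    simp only [hχ_def, Finset.mem_range] at hj ⊢
    simp [hj]
  have hχsm : Summable χ := summable_of_ne_finset_zero hχ0
  have hχtsum : (∑' j, χ j) = ∑ j ∈ Finset.range n, χ j := tsum_eq_sum hχ0
  have hS : (∑ i ∈ Finset.Icc 1 n, U q (i - 1) * (q i / (i : ℝ)) * G i)
      = ∑ j ∈ Finset.range n, χ j := by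
    rw [← Finset.Ico_add_one_right_eq_Icc, Finset.sum_Ico_eq_sum_range]
    have hn : n + 1 - 1 = n := by omega
    rw [hn]
    apply Finset.sum_congr rfl
    intro j hj
    rw [Finset.mem_range] at hj
    have h2 : 1 + j = j + 1 := by omega
    rw [h2]
    have h3 : j + 1 - 1 = j := by omega
    rw [h3]
    simp only [hχ_def, if_pos hj, hdeq]
    have h1 : ((j + 1 : ℕ) : ℝ) = (j : ℝ) + 1 := by push_cast; ring
    rw [h1]
  have habs : ∀ j, |f j - χ j| ≤ ε * d j := by
    intro j
    by_cases hj : j < n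
    · simp only [hχ_def, if_pos hj]
      rw [hfeq]
      have : d j * (((j : ℝ) + 1) * lam p (j + 1)) - d j * G (j + 1)
          = d j * (((j : ℝ) + 1) * lam p (j + 1) - G (j + 1)) := by ring
      rw [this, abs_mul, abs_of_nonneg (hd0 j)]
      have hGj := hG (j + 1) (by omega) (by omega)
      rw [abs_sub_comm] at hGj
      push_cast at hGj
      calc d j * |((j : ℝ) + 1) * lam p (j + 1) - G (j + 1)| ≤ d j * ε :=
            mul_le_mul_of_nonneg_left hGj (hd0 j)
        _ = ε * d j := by ring
    · simp only [hχ_def, if_neg hj, sub_zero]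
      rw [abs_of_nonneg (hf0 j), hfeq]
      have ht := htail (j + 1) (by omega)
      push_cast at ht
      calc d j * (((j : ℝ) + 1) * lam p (j + 1)) ≤ d j * ε :=
            mul_le_mul_of_nonneg_left ht (hd0 j)
        _ = ε * d j := by ring
  have hhsm : Summable (fun j => f j - χ j) := hfsm.sub hχsm
  have hA : A p q = ∑' j, f j := rfl
  rw [hA, hS, ← hχtsum, ← Summable.tsum_sub hfsm hχsm]
  have habssm : Summable (fun j => |f j - χ j|) := hhsm.abs
  calc |∑' j, (f j - χ j)| ≤ ∑' j, |f j - χ j| := by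
        have := norm_tsum_le_tsum_norm (f := fun j => f j - χ j)
          (by simpa [Real.norm_eq_abs] using habssm)
        simpa [Real.norm_eq_abs] using this
    _ ≤ ∑' j, ε * d j := Summable.tsum_le_tsum habs habssm (hdsm.mul_left ε)
    _ = ε * ∑' j, d j := tsum_mul_left
    _ ≤ ε * 1 := mul_le_mul_of_nonneg_left hdtsum hε.le
    _ = ε := mul_one ε
end

section
/- Let c_0 > 0, let f : ℕ → ℝ_{>0} be a nondecreasing positive function, and let M : ℕ × ℕ → ℝ satisfy M(s,n) ≥ c_0·(f(s)/f(n)) whenever s ≤ n and M(s,n) ≥ 0 otherwise. Then for any integers n_ ≤ n̄ there exists a probability vector x supported on {n_, n_+1, ..., n̄} such that for every n ∈ {n_, ..., n̄}, Σ_{s=n_}^{n̄} x_s · M(s,n) ≥ c_0 / (1 + log(f(n̄)/f(n_))). -/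
open scoped BigOperators

theorem stmt10 (c₀ : ℝ) (hc₀ : 0 < c₀) (f : ℕ → ℝ) (hfpos : ∀ n, 0 < f n)
    (hfmono : Monotone f) (M : ℕ → ℕ → ℝ)
    (hM : ∀ s n, s ≤ n → c₀ * (f s / f n) ≤ M s n)
    (hM0 : ∀ s n, n < s → 0 ≤ M s n)
    (nlo nhi : ℕ) (h : nlo ≤ nhi) :
    ∃ x : ℕ → ℝ, (∀ s, 0 ≤ x s) ∧ (∀ s, s < nlo ∨ nhi < s → x s = 0) ∧
      (∑ s ∈ Finset.Icc nlo nhi, x s = 1) ∧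
      ∀ n, nlo ≤ n → n ≤ nhi →
        c₀ / (1 + Real.log (f nhi / f nlo)) ≤ ∑ s ∈ Finset.Icc nlo nhi, x s * M s n := by
  set w : ℕ → ℝ := fun s => if s = nlo then 1 else (f s - f (s - 1)) / f s with hw
  have hw0 : ∀ s, 0 ≤ w s := by
    intro s
    by_cases hs : s = nlo
    · simp [hw, hs]
    · simp only [hw, hs, if_false]
      exact div_nonneg (sub_nonneg.2 (hfmono (Nat.sub_le s 1))) (hfpos s).le
  set W : ℝ := ∑ s ∈ Finset.Icc nlo nhi, w s with hWdef
  -- telescoping: ∑_{s=nlo}^n w s * f s = f n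
  have htel : ∀ n, nlo ≤ n → ∑ s ∈ Finset.Icc nlo n, w s * f s = f n := by
    intro n hn
    induction n, hn using Nat.le_induction with
    | base => simp [hw]
    | succ n hn ih =>
        rw [Finset.sum_Icc_succ_top (Nat.le_succ_of_le hn), ih]
        have hne : n + 1 ≠ nlo := by omega
        simp only [hw, hne, if_false]
        rw [Nat.add_sub_cancel, div_mul_cancel₀ _ (hfpos (n + 1)).ne']
        ring
  -- the normalizer is bounded by 1 + log ratio
  have hWle : ∀ n, nlo ≤ n →
      ∑ s ∈ Finset.Icc nlo n, w s ≤ 1 + (Real.log (f n) - Real.log (f nlo)) := by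
    intro n hn
    induction n, hn using Nat.le_induction with
    | base => simp [hw]
    | succ n hn ih =>
        rw [Finset.sum_Icc_succ_top (Nat.le_succ_of_le hn)]
        have hne : n + 1 ≠ nlo := by omega
        have hstep : w (n + 1) ≤ Real.log (f (n + 1)) - Real.log (f n) := by
          simp only [hw, hne, if_false, Nat.add_sub_cancel]
          have hlog := Real.log_le_sub_one_of_pos
            (div_pos (hfpos n) (hfpos (n + 1)))
          rw [Real.log_div (hfpos n).ne' (hfpos (n + 1)).ne'] at hlog
          have : (f (n + 1) - f n) / f (n + 1) = 1 - f n / f (n + 1) := by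
            rw [sub_div, div_self (hfpos (n + 1)).ne']
          rw [this]; linarith
        linarith
  have hW1 : (1 : ℝ) ≤ W := by
    have := Finset.single_le_sum (f := w) (fun s _ => hw0 s)
      (Finset.mem_Icc.2 ⟨le_refl nlo, h⟩)
    simpa [hw] using this
  have hWpos : (0 : ℝ) < W := lt_of_lt_of_le one_pos hW1
  have hZ : W ≤ 1 + Real.log (f nhi / f nlo) := by
    rw [Real.log_div (hfpos nhi).ne' (hfpos nlo).ne']
    exact hWle nhi h
  have hZpos : (0 : ℝ) < 1 + Real.log (f nhi / f nlo) := lt_of_lt_of_le hWpos hZ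
  refine ⟨fun s => if nlo ≤ s ∧ s ≤ nhi then w s / W else 0, ?_, ?_, ?_, ?_⟩
  · intro s
    show (0:ℝ) ≤ if nlo ≤ s ∧ s ≤ nhi then w s / W else 0
    by_cases hs : nlo ≤ s ∧ s ≤ nhi
    · rw [if_pos hs]; exact div_nonneg (hw0 s) hWpos.le
    · rw [if_neg hs]
  · intro s hs
    have : ¬(nlo ≤ s ∧ s ≤ nhi) := by omega
    simp [this]
  · have hx : ∀ s ∈ Finset.Icc nlo nhi,
        (if nlo ≤ s ∧ s ≤ nhi then w s / W else 0) = w s / W := by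
      intro s hs; rw [Finset.mem_Icc] at hs; rw [if_pos hs]
    rw [Finset.sum_congr rfl hx, ← Finset.sum_div, ← hWdef, div_self hWpos.ne']
  · intro n hn1 hn2
    have hsub : Finset.Icc nlo n ⊆ Finset.Icc nlo nhi := Finset.Icc_subset_Icc_right hn2
    have step1 : ∑ s ∈ Finset.Icc nlo n, (if nlo ≤ s ∧ s ≤ nhi then w s / W else 0) * M s n
        ≤ ∑ s ∈ Finset.Icc nlo nhi, (if nlo ≤ s ∧ s ≤ nhi then w s / W else 0) * M s n := by
      apply Finset.sum_le_sum_of_subset_of_nonneg hsub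
      intro s hs hs'
      rw [Finset.mem_Icc] at hs
      rw [Finset.mem_Icc] at hs'
      have hns : n < s := by omega
      have hx0 : (0:ℝ) ≤ (if nlo ≤ s ∧ s ≤ nhi then w s / W else 0) := by
        rw [if_pos ⟨hs.1, hs.2⟩]; exact div_nonneg (hw0 s) hWpos.le
      exact mul_nonneg hx0 (hM0 s n hns)
    have step2 : ∑ s ∈ Finset.Icc nlo n, w s / W * (c₀ * (f s / f n))
        ≤ ∑ s ∈ Finset.Icc nlo n, (if nlo ≤ s ∧ s ≤ nhi then w s / W else 0) * M s n := by
      apply Finset.sum_le_sum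
      intro s hs
      rw [Finset.mem_Icc] at hs
      have hsnhi : s ≤ nhi := le_trans hs.2 hn2
      simp only [hs.1, hsnhi, and_self, if_true]
      exact mul_le_mul_of_nonneg_left (hM s n hs.2) (div_nonneg (hw0 s) hWpos.le)
    have step3 : ∑ s ∈ Finset.Icc nlo n, w s / W * (c₀ * (f s / f n)) = c₀ / W := by
      have : ∀ s, w s / W * (c₀ * (f s / f n)) = (w s * f s) * (c₀ / W / f n) := by
        intro s; field_simp
      rw [Finset.sum_congr rfl (fun s _ => this s), ← Finset.sum_mul, htel n hn1,
        mul_comm, div_mul_cancel₀ _ (hfpos n).ne']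
    have step4 : c₀ / (1 + Real.log (f nhi / f nlo)) ≤ c₀ / W :=
      div_le_div_of_nonneg_left hc₀.le hWpos hZ
    linarith
end

section
/- Let n ≥ 2 and 0 < a_1 ≤ a_2 ≤ ⋯ ≤ a_n, and set c = (n − Σ_{i=1}^{n−1} a_i/a_{i+1})^{−1}, p_l = c·(1 − a_l/a_{l+1}) for l = 1,...,n−1 and p_n = c. Then (p_1,...,p_n) is a probability vector, and for every probability vector (q_1,...,q_n), Σ_{i=1}^{n} q_i · (Σ_{j=i}^{n} (a_i/a_j)·p_j) = c. Moreover, if a_i = x^{(n−i)/(n−1)} for some x ∈ (0,1], then c = (1 + (n−1)(1 − x^{1/(n−1)}))^{−1}, and this quantity converges to 1/(1 + log(1/x)) as n → ∞. -/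
open scoped BigOperators
open Filter

theorem stmt11 (n : ℕ) (hn : 2 ≤ n) (a : ℕ → ℝ)
    (ha1 : 0 < a 1) (hamono : ∀ i, 1 ≤ i → i < n → a i ≤ a (i + 1))
    (c : ℝ) (hc : c = ((n : ℝ) - ∑ i ∈ Finset.Icc 1 (n - 1), a i / a (i + 1))⁻¹)
    (p : ℕ → ℝ) (hpdef : ∀ l, p l = if l = n then c else c * (1 - a l / a (l + 1))) :
    (∀ l, 1 ≤ l → l ≤ n → 0 ≤ p l) ∧
    (∑ l ∈ Finset.Icc 1 n, p l = 1) ∧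
    (∀ q : ℕ → ℝ, (∀ i, 1 ≤ i → i ≤ n → 0 ≤ q i) → (∑ i ∈ Finset.Icc 1 n, q i = 1) →
      ∑ i ∈ Finset.Icc 1 n, q i * (∑ j ∈ Finset.Icc i n, (a i / a j) * p j) = c) ∧
    (∀ x : ℝ, 0 < x → x ≤ 1 →
      (∀ i, 1 ≤ i → i ≤ n → a i = x ^ (((n : ℝ) - (i : ℝ)) / ((n : ℝ) - 1))) →
      c = (1 + ((n : ℝ) - 1) * (1 - x ^ ((1 : ℝ) / ((n : ℝ) - 1))))⁻¹) ∧
    (∀ x : ℝ, 0 < x → x ≤ 1 →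
      Filter.Tendsto (fun m : ℕ => (1 + ((m : ℝ) - 1) * (1 - x ^ ((1 : ℝ) / ((m : ℝ) - 1))))⁻¹)
        Filter.atTop (nhds (1 / (1 + Real.log (1 / x))))) := by
  -- positivity of a
  have hapos : ∀ i, 1 ≤ i → i ≤ n → 0 < a i := by
    intro i hi1 hin
    induction i with
    | zero => omega
    | succ k ih =>
      rcases Nat.eq_or_lt_of_le hi1 with h | h
      · simpa [← h] using ha1
      · have hk1 : 1 ≤ k := by omega
        have hkn : k < n := by omega
        exact lt_of_lt_of_le (ih hk1 (le_of_lt hkn)) (hamono k hk1 hkn)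
  -- each ratio in (0,1]
  have hratio : ∀ i ∈ Finset.Icc 1 (n-1), 0 < a i / a (i+1) ∧ a i / a (i+1) ≤ 1 := by
    intro i hi
    rw [Finset.mem_Icc] at hi
    have hi1 : 1 ≤ i := hi.1
    have hin : i < n := by omega
    have h1 : 0 < a i := hapos i hi1 hin.le
    have h2 : 0 < a (i+1) := hapos (i+1) (by omega) (by omega)
    constructor
    · positivity
    · rw [div_le_one h2]; exact hamono i hi1 hin
  set S := ∑ i ∈ Finset.Icc 1 (n - 1), a i / a (i + 1) with hS
  have hSle : S ≤ (n : ℝ) - 1 := by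
    calc S ≤ ∑ i ∈ Finset.Icc 1 (n-1), (1:ℝ) :=
            Finset.sum_le_sum (fun i hi => (hratio i hi).2)
      _ = (n : ℝ) - 1 := by
          rw [Finset.sum_const, Nat.card_Icc]
          have : n - 1 + 1 - 1 = n - 1 := by omega
          rw [this]
          have : ((n-1 : ℕ) : ℝ) = (n:ℝ) - 1 := by
            have : (1:ℕ) ≤ n := by omega
            push_cast [this]; ring
          simp [this]
  have hnS : (1:ℝ) ≤ (n:ℝ) - S := by
    have : (2:ℝ) ≤ (n:ℝ) := by exact_mod_cast hn
    linarith
  have hnSne : (n:ℝ) - S ≠ 0 := by linarith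
  have hcpos : 0 < c := by rw [hc]; positivity
  -- inner sum lemma
  have hinner : ∀ d i, 1 ≤ i → i + d = n → ∑ j ∈ Finset.Icc i n, (a i / a j) * p j = c := by
    intro d
    induction d with
    | zero =>
      intro i hi1 hin
      obtain rfl : i = n := by omega
      rw [Finset.Icc_self, Finset.sum_singleton, hpdef]
      have := hapos i hi1 le_rfl
      simp [div_self (ne_of_gt this)]
    | succ k ih =>
      intro i hi1 hin
      have hilt : i < n := by omega
      rw [Finset.Icc_eq_cons_Ioc hilt.le, Finset.sum_cons, ← Finset.Icc_add_one_left_eq_Ioc]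
      have hai : 0 < a i := hapos i hi1 hilt.le
      have hai1 : 0 < a (i+1) := hapos (i+1) (by omega) (by omega)
      have hsub : ∑ j ∈ Finset.Icc (i+1) n, (a i / a j) * p j
          = (a i / a (i+1)) * ∑ j ∈ Finset.Icc (i+1) n, (a (i+1) / a j) * p j := by
        rw [Finset.mul_sum]
        apply Finset.sum_congr rfl
        intro j hj
        rw [Finset.mem_Icc] at hj
        have haj : 0 < a j := hapos j (by omega) hj.2
        field_simp
      rw [hsub, ih (i+1) (by omega) (by omega), div_self (ne_of_gt hai), one_mul,
        hpdef i, if_neg (by omega)]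
      ring
  have hpsum : ∑ l ∈ Finset.Icc 1 n, p l = 1 := by
    obtain ⟨m, rfl⟩ : ∃ m, n = m + 1 := ⟨n - 1, by omega⟩
    rw [Finset.sum_Icc_succ_top (by omega)]
    have h1 : ∀ l ∈ Finset.Icc 1 ((m+1) - 1), p l = c - c * (a l / a (l+1)) := by
      intro l hl
      rw [Finset.mem_Icc] at hl
      rw [hpdef l, if_neg (by omega)]
      ring
    have hmm : (m + 1) - 1 = m := by omega
    rw [hmm] at h1
    rw [Finset.sum_congr rfl h1, Finset.sum_sub_distrib, Finset.sum_const, ← Finset.mul_sum,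
      hpdef (m+1), if_pos rfl]
    have hScard : S = ∑ i ∈ Finset.Icc 1 m, a i / a (i+1) := by rw [hS, hmm]
    rw [← hScard, Nat.card_Icc]
    have hcval : c * ((↑(m+1):ℝ) - S) = 1 := by
      rw [hc]
      exact inv_mul_cancel₀ hnSne
    have hm1 : ((m + 1 - 1 : ℕ) : ℝ) = (m : ℝ) := by push_cast; ring
    rw [nsmul_eq_mul, hm1]
    push_cast at hcval ⊢
    linear_combination hcval
  refine ⟨?_, hpsum, ?_, ?_, ?_⟩
  · -- nonneg
    intro l hl1 hln
    rw [hpdef l]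
    split_ifs with h
    · exact hcpos.le
    · have hlt : l < n := by omega
      have := hapos l hl1 hlt.le
      have h2 := hapos (l+1) (by omega) (by omega)
      have : a l / a (l+1) ≤ 1 := by rw [div_le_one h2]; exact hamono l hl1 hlt
      nlinarith
  · -- main identity
    intro q hq hqsum
    have : ∀ i ∈ Finset.Icc 1 n, q i * (∑ j ∈ Finset.Icc i n, (a i / a j) * p j) = q i * c := by
      intro i hi
      rw [Finset.mem_Icc] at hi
      rw [hinner (n - i) i hi.1 (by omega)]
    rw [Finset.sum_congr rfl this, ← Finset.sum_mul, hqsum, one_mul]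
  · -- explicit c for geometric a
    intro x hx hx1 hax
    have hn1 : ((n:ℝ) - 1) ≠ 0 := by
      have : (2:ℝ) ≤ (n:ℝ) := by exact_mod_cast hn
      linarith
    have hterm : ∀ i ∈ Finset.Icc 1 (n-1), a i / a (i+1) = x ^ ((1:ℝ) / ((n:ℝ) - 1)) := by
      intro i hi
      rw [Finset.mem_Icc] at hi
      have hi1 : 1 ≤ i := hi.1
      have hin : i + 1 ≤ n := by omega
      rw [hax i hi1 (by omega), hax (i+1) (by omega) hin, ← Real.rpow_sub hx]
      congr 1
      have : ((i+1 : ℕ) : ℝ) = (i:ℝ) + 1 := by push_cast; ring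
      rw [this]
      field_simp
      ring
    have hSval : S = ((n:ℝ) - 1) * x ^ ((1:ℝ) / ((n:ℝ) - 1)) := by
      rw [hS, Finset.sum_congr rfl hterm, Finset.sum_const, Nat.card_Icc]
      have h1 : n - 1 + 1 - 1 = n - 1 := by omega
      rw [h1]
      have : ((n-1 : ℕ) : ℝ) = (n:ℝ) - 1 := by
        have : (1:ℕ) ≤ n := by omega
        push_cast [this]; ring
      rw [nsmul_eq_mul, this]
    rw [hc, hSval]
    congr 1
    ring
  · -- limit
    intro x hx hx1
    set L := Real.log x with hL
    have hd : HasDerivAt (fun t : ℝ => Real.exp (t * L)) L 0 := by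
      have := ((hasDerivAt_id (0:ℝ)).mul_const L).exp
      simpa using this
    have hslope := hasDerivAt_iff_tendsto_slope.mp hd
    have ht0 : Tendsto (fun m : ℕ => ((m : ℝ) - 1)⁻¹) atTop (nhdsWithin 0 {(0:ℝ)}ᶜ) := by
      have h1 : Tendsto (fun m : ℕ => ((m : ℝ) - 1)) atTop atTop :=
        tendsto_atTop_add_const_right atTop (-1) tendsto_natCast_atTop_atTop
      have h2 : Tendsto (fun m : ℕ => ((m : ℝ) - 1)⁻¹) atTop (nhds 0) := h1.inv_tendsto_atTop
      refine tendsto_nhdsWithin_of_tendsto_nhds_of_eventually_within _ h2 ?_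
      filter_upwards [eventually_ge_atTop 2] with m hm
      have : (1:ℝ) ≤ (m:ℝ) - 1 := by
        have : (2:ℝ) ≤ (m:ℝ) := by exact_mod_cast hm
        linarith
      simp only [Set.mem_compl_iff, Set.mem_singleton_iff]
      positivity
    have hcomp := hslope.comp ht0
    have hmain : Tendsto (fun m : ℕ => ((m : ℝ) - 1) * (1 - x ^ ((1 : ℝ) / ((m : ℝ) - 1))))
        atTop (nhds (-L)) := by
      have := hcomp.neg
      apply this.congr'
      filter_upwards [eventually_ge_atTop 2] with m hm
      have hm1 : (1:ℝ) ≤ (m:ℝ) - 1 := by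
        have : (2:ℝ) ≤ (m:ℝ) := by exact_mod_cast hm
        linarith
      have hne : (m:ℝ) - 1 ≠ 0 := by positivity
      have hrpow : x ^ ((1 : ℝ) / ((m : ℝ) - 1)) = Real.exp (((m:ℝ)-1)⁻¹ * L) := by
        rw [Real.rpow_def_of_pos hx, one_div, mul_comm]
      rw [hrpow]
      simp only [Function.comp, slope_def_field, Real.exp_zero]
      field_simp
      ring
      rw [Real.exp_zero]; ring
    have hlog : Real.log (1/x) = -L := by rw [one_div, Real.log_inv]
    have hne : (1:ℝ) + -L ≠ 0 := by
      have : L ≤ 0 := Real.log_nonpos hx.le hx1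
      linarith
    have hfin := (tendsto_const_nhds.add hmain).inv₀ hne
    rw [hlog, one_div]
    exact hfin
end

section
/- Define h̄(z) = z^{−z/(2(z−1))} − z^{−1/(z−1)} for z > 1. Let n, K ∈ ℕ with n ≥ 2 and K^{1/(n−1)} ≥ 2, and let ξ ≥ (n−1)·(1 + h̄(K^{1/(n−1)})). Then there exist reals 0 = g_0 ≤ g_1 ≤ ⋯ ≤ g_{n−1} ≤ g_n = 1 and positive integers k_1 ≤ k_2 ≤ ⋯ ≤ k_n ≤ K such that Σ_{i=1}^{n} (1 − (g_i^{k_i} − g_{i−1}^{k_i})) ≤ ξ. -/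
open scoped BigOperators

/-- `h̄(z) = z^{-z/(2(z-1))} - z^{-1/(z-1)}`. -/
noncomputable def hbar (z : ℝ) : ℝ := z ^ (-(z / (2 * (z - 1)))) - z ^ (-(1 / (z - 1)))

theorem stmt12 (n K : ℕ) (hn : 2 ≤ n)
    (hK : (2 : ℝ) ≤ (K : ℝ) ^ ((1 : ℝ) / ((n : ℝ) - 1)))
    (ξ : ℝ) (hξ : ((n : ℝ) - 1) * (1 + hbar ((K : ℝ) ^ ((1 : ℝ) / ((n : ℝ) - 1)))) ≤ ξ) :
    ∃ g : ℕ → ℝ, ∃ k : ℕ → ℕ,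
      g 0 = 0 ∧ g n = 1 ∧ (∀ i, i < n → g i ≤ g (i + 1)) ∧
      (∀ i, 1 ≤ i → i ≤ n → 1 ≤ k i) ∧
      (∀ i, 1 ≤ i → i < n → k i ≤ k (i + 1)) ∧
      (∀ i, 1 ≤ i → i ≤ n → k i ≤ K) ∧
      ∑ i ∈ Finset.Icc 1 n, (1 - (g i ^ k i - g (i - 1) ^ k i)) ≤ ξ := by
  set z : ℝ := (K : ℝ) ^ ((1 : ℝ) / ((n : ℝ) - 1)) with hz_def
  have hz2 : (2 : ℝ) ≤ z := hK
  have hz0 : (0 : ℝ) < z := by linarith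
  have hz1 : (1 : ℝ) < z := by linarith
  set c : ℝ := z ^ (-(1 / (z - 1))) with hc_def
  have hc0 : (0 : ℝ) < c := Real.rpow_pos_of_pos hz0 _
  have hc1 : c < 1 := by
    apply Real.rpow_lt_one_of_one_lt_of_neg hz1
    have h : (0:ℝ) < 1 / (z - 1) := by
      have : (0:ℝ) < z - 1 := by linarith
      positivity
    linarith
  -- z ^ (n-1) = K
  have hnr : ((n - 1 : ℕ) : ℝ) = (n : ℝ) - 1 := by
    have : (1:ℕ) ≤ n := by omega
    push_cast [this]; ring
  have hn1 : (0:ℝ) < (n : ℝ) - 1 := by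
    have : (2:ℝ) ≤ (n:ℝ) := by exact_mod_cast hn
    linarith
  have hzK : z ^ (n - 1) = (K : ℝ) := by
    rw [← Real.rpow_natCast z (n-1), hnr, hz_def, ← Real.rpow_mul (Nat.cast_nonneg K)]
    rw [one_div_mul_cancel (by linarith : (n:ℝ) - 1 ≠ 0), Real.rpow_one]
  set k : ℕ → ℕ := fun i => ⌈z ^ (i - 1)⌉₊ with hk_def
  have hk1 : ∀ i, 1 ≤ k i := by
    intro i
    rw [Nat.one_le_ceil_iff]
    positivity
  have hkmono : ∀ i j, i ≤ j → k i ≤ k j := by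
    intro i j hij
    exact Nat.ceil_le_ceil (pow_le_pow_right₀ (by linarith) (by omega))
  have hkn : k n = K := by
    show ⌈z ^ (n - 1)⌉₊ = K
    rw [hzK, Nat.ceil_natCast]
  have hkK : ∀ i, i ≤ n → k i ≤ K := fun i hi => hkn ▸ hkmono _ _ hi
  set g : ℕ → ℝ := fun i => if i = 0 then 0 else if n ≤ i then 1 else c ^ ((k i : ℝ))⁻¹
    with hg_def
  have hg0 : g 0 = 0 := rfl
  have hgn : g n = 1 := by
    simp only [hg_def]
    rw [if_neg (by omega), if_pos le_rfl]
  have hgmid : ∀ i, 1 ≤ i → i < n → g i = c ^ ((k i : ℝ))⁻¹ := by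
    intro i h1 h2
    simp only [hg_def]
    rw [if_neg (by omega), if_neg (by omega)]
  -- g i ^ k i = c for 1 ≤ i < n
  have hgpow : ∀ i, 1 ≤ i → i < n → g i ^ k i = c := by
    intro i h1 h2
    rw [hgmid i h1 h2, ← Real.rpow_natCast (c ^ ((k i : ℝ))⁻¹) (k i),
      ← Real.rpow_mul hc0.le, inv_mul_cancel₀
        (Nat.cast_ne_zero.mpr (Nat.one_le_iff_ne_zero.mp (hk1 i))), Real.rpow_one]
  -- cross term bound
  have hcross : ∀ i, 2 ≤ i → i ≤ n → g (i - 1) ^ k i ≤ c ^ (z / 2) := by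
    intro i h2 hin
    rw [hgmid (i-1) (by omega) (by omega), ← Real.rpow_natCast (c ^ ((k (i-1) : ℝ))⁻¹) (k i),
      ← Real.rpow_mul hc0.le]
    apply Real.rpow_le_rpow_of_exponent_ge hc0 hc1.le
    -- z/2 ≤ (k (i-1))⁻¹ * k i
    have hkpos : (0:ℝ) < (k (i-1) : ℝ) := by exact_mod_cast hk1 (i-1)
    rw [le_inv_mul_iff₀ hkpos]
    have hb1 : (k (i-1) : ℝ) ≤ 2 * z ^ (i - 2) := by
      have h1 : (k (i-1) : ℝ) < z ^ (i - 1 - 1) + 1 := Nat.ceil_lt_add_one (by positivity)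
      have h2' : (1:ℝ) ≤ z ^ (i - 2) := one_le_pow₀ (by linarith : (1:ℝ) ≤ z)
      have : i - 1 - 1 = i - 2 := by omega
      rw [this] at h1
      linarith
    have hb2 : z * z ^ (i - 2) ≤ (k i : ℝ) := by
      have h1 : z ^ (i - 1) ≤ (k i : ℝ) := Nat.le_ceil _
      have : i - 1 = (i - 2) + 1 := by omega
      rw [this, pow_succ] at h1
      linarith [mul_comm z (z ^ (i-2))]
    have hz2' : (0:ℝ) ≤ z / 2 := by linarith
    calc (k (i-1) : ℝ) * (z / 2) ≤ (2 * z ^ (i-2)) * (z / 2) :=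
          mul_le_mul_of_nonneg_right hb1 hz2'
      _ = z * z ^ (i - 2) := by ring
      _ ≤ (k i : ℝ) := hb2
  have hgmono : ∀ i, i < n → g i ≤ g (i + 1) := by
    intro i hi
    rcases Nat.eq_zero_or_pos i with h0 | h1
    · subst h0
      rw [hg0]
      rcases Nat.lt_or_ge 1 n with h | h
      · rw [hgmid 1 le_rfl h]; positivity
      · have : n = 1 := by omega
        omega
    · rcases Nat.lt_or_ge (i+1) n with h | h
      · rw [hgmid i h1 hi, hgmid (i+1) (by omega) h]
        apply Real.rpow_le_rpow_of_exponent_ge hc0 hc1.le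
        have p1 : (0:ℝ) < (k i : ℝ) := by exact_mod_cast hk1 i
        have p2 : (0:ℝ) < (k (i+1) : ℝ) := by exact_mod_cast hk1 (i+1)
        have : (k i : ℝ) ≤ (k (i+1) : ℝ) := by exact_mod_cast hkmono i (i+1) (by omega)
        exact inv_anti₀ p1 this
      · have hi1 : i + 1 = n := by omega
        rw [hi1, hgn, hgmid i h1 hi]
        exact Real.rpow_le_one hc0.le hc1.le (by positivity)
  -- per-term bound
  have hterm : ∀ i ∈ Finset.Icc 1 n,
      1 - (g i ^ k i - g (i - 1) ^ k i) ≤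
        (if i < n then 1 - c else 0) + (if 2 ≤ i then c ^ (z / 2) else 0) := by
    intro i hi
    rw [Finset.mem_Icc] at hi
    obtain ⟨hi1, hi2⟩ := hi
    rcases Nat.lt_or_ge i n with hlt | hge
    · rw [if_pos hlt, hgpow i hi1 hlt]
      rcases Nat.lt_or_ge i 2 with h2 | h2
      · have : i = 1 := by omega
        subst this
        rw [if_neg (by omega)]
        have : g 0 ^ k 1 = 0 := by
          rw [hg0]
          exact zero_pow (Nat.one_le_iff_ne_zero.mp (hk1 1))
        simp only [Nat.sub_self] at this ⊢
        rw [this]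
        linarith
      · rw [if_pos h2]
        have := hcross i h2 hi2
        linarith
    · have hin : i = n := by omega
      rw [hin, if_neg (by omega), if_pos hn, hgn, one_pow]
      have := hcross n hn le_rfl
      linarith
  have hsum := Finset.sum_le_sum hterm
  rw [Finset.sum_add_distrib] at hsum
  have e1 : ∑ i ∈ Finset.Icc 1 n, (if i < n then 1 - c else 0) = ((n:ℝ) - 1) * (1 - c) := by
    rw [← Finset.sum_filter]
    have : (Finset.Icc 1 n).filter (· < n) = Finset.Icc 1 (n-1) := by
      ext x
      simp only [Finset.mem_filter, Finset.mem_Icc]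
      omega
    rw [this, Finset.sum_const, Nat.card_Icc]
    have : (n - 1 + 1 - 1 : ℕ) = n - 1 := by omega
    rw [this, nsmul_eq_mul, hnr]
  have e2 : ∑ i ∈ Finset.Icc 1 n, (if 2 ≤ i then c ^ (z/2) else 0)
      = ((n:ℝ) - 1) * c ^ (z/2) := by
    rw [← Finset.sum_filter]
    have : (Finset.Icc 1 n).filter (2 ≤ ·) = Finset.Icc 2 n := by
      ext x
      simp only [Finset.mem_filter, Finset.mem_Icc]
      omega
    rw [this, Finset.sum_const, Nat.card_Icc]
    have : (n + 1 - 2 : ℕ) = n - 1 := by omega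
    rw [this, nsmul_eq_mul, hnr]
  rw [e1, e2] at hsum
  -- identify c^(z/2) with the hbar term
  have hcz : c ^ (z / 2) = z ^ (-(z / (2 * (z - 1)))) := by
    rw [hc_def, ← Real.rpow_mul hz0.le]
    congr 1
    field_simp
  have hhbar : hbar z = c ^ (z/2) - c := by
    rw [hbar, hcz, hc_def]
  refine ⟨g, k, hg0, hgn, hgmono, fun i h1 h2 => hk1 i, fun i h1 h2 => hkmono i (i+1) (by omega),
    fun i h1 h2 => hkK i h2, ?_⟩
  calc ∑ i ∈ Finset.Icc 1 n, (1 - (g i ^ k i - g (i - 1) ^ k i))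
      ≤ ((n:ℝ) - 1) * (1 - c) + ((n:ℝ) - 1) * c ^ (z/2) := hsum
    _ = ((n:ℝ) - 1) * (1 + hbar z) := by rw [hhbar]; ring
    _ ≤ ξ := hξ
end

section
/- Let T ≥ 3 be an integer and let s* ≥ 2 be an integer satisfying Σ_{i=s*}^{T−1} 1/i ≤ 1 and Σ_{i=s*−1}^{T−1} 1/i > 1. Then ((s* − 1)/T) · Σ_{i=s*−1}^{T−1} 1/i ≥ 1/e. -/
open scoped BigOperators

/-- Trapezoid-type bound: `log(x+1) - log x ≤ 1/(2x) + 1/(2(x+1))` for `x ≥ 1`. -/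
lemma key_ineq (x : ℝ) (hx : 1 ≤ x) :
    Real.log (x + 1) - Real.log x ≤ 1 / (2 * x) + 1 / (2 * (x + 1)) := by
  have hx0 : 0 < x := lt_of_lt_of_le one_pos hx
  have hx1 : 0 < x + 1 := by linarith
  set u : ℝ := (x + 1) / x with hu
  have hu1 : 1 < u := by
    rw [hu, lt_div_iff₀ hx0]; linarith
  have hlogu : 0 < Real.log u := Real.log_pos hu1
  have hsinh : Real.log u < Real.sinh (Real.log u) := Real.self_lt_sinh_iff.mpr hlogu
  have hu0 : 0 < u := lt_trans one_pos hu1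
  have hsinh_eq : Real.sinh (Real.log u) = (u - u⁻¹) / 2 := by
    rw [Real.sinh_eq, Real.exp_log hu0, ← Real.log_inv, Real.exp_log (by positivity)]
  have hlogdiff : Real.log (x + 1) - Real.log x = Real.log u := by
    rw [hu, Real.log_div (by linarith) (ne_of_gt hx0)]
  have heq : (u - u⁻¹) / 2 = 1 / (2 * x) + 1 / (2 * (x + 1)) := by
    rw [hu, inv_div]
    field_simp
    ring
  rw [hlogdiff]
  rw [hsinh_eq, heq] at hsinh
  linarith

/-- Lower bound on harmonic-type sums via trapezoid rule. -/
lemma lemA (n : ℕ) (hn : 1 ≤ n) : ∀ N : ℕ, n ≤ N →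
    Real.log N - Real.log n + 1 / (2 * (n : ℝ)) - 1 / (2 * (N : ℝ)) ≤
      ∑ i ∈ Finset.Ico n N, (1 : ℝ) / i := by
  intro N hN
  induction N, hN using Nat.le_induction with
  | base => simp
  | succ N hN ih =>
    have hN1 : (1 : ℝ) ≤ (N : ℝ) := by exact_mod_cast hn.trans hN
    have hN0 : (0 : ℝ) < (N : ℝ) := by linarith
    have key := key_ineq (N : ℝ) hN1
    rw [Finset.sum_Ico_succ_top hN]
    have hcast : ((N + 1 : ℕ) : ℝ) = (N : ℝ) + 1 := by push_cast; ring
    rw [hcast]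
    have hhalf : (1 : ℝ) / (2 * (N : ℝ)) + 1 / (2 * (N : ℝ)) = 1 / (N : ℝ) := by
      rw [← add_div]
      rw [show (1 : ℝ) + 1 = 2 by norm_num]
      rw [div_eq_div_iff (by positivity) (by positivity)]
      ring
    linarith

lemma hpoly_aux (A B : ℝ) (hA2 : 2 ≤ A) (hBe : 27/10 * A ≤ B) :
    3/4 * (1/(2*A) + 1/(2*B))^2 ≤ 1/(2*A) - 1/(2*B) := by
  have hA0 : (0:ℝ) < A := by linarith
  have hB0 : (0:ℝ) < B := by nlinarith
  have ht : (0:ℝ) ≤ B - 27/10 * A := by linarith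
  have ha2 : (0:ℝ) ≤ A - 2 := by linarith
  have hm : 1 / (2 * A) + 1 / (2 * B) = (A + B) / (2 * A * B) := by
    field_simp; ring
  have hd : 1 / (2 * A) - 1 / (2 * B) = (B - A) / (2 * A * B) := by
    field_simp
  have g : (3/2) * (A+B)^2 ≤ 4*A*B*(B-A) := by
    nlinarith [mul_nonneg (mul_nonneg hA0.le hA0.le) ha2, mul_nonneg (mul_nonneg hA0.le ht) ha2,
      mul_nonneg (mul_nonneg ht ht) ha2, mul_nonneg hA0.le ht, mul_nonneg ht ht, sq_nonneg A]
  rw [hm, hd, div_pow, ← mul_div_assoc, div_le_div_iff₀ (by positivity) (by positivity)]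
  nlinarith [mul_le_mul_of_nonneg_right g (mul_nonneg hA0.le hB0.le), mul_pos hA0 hB0]

lemma icc_eq_ico (a b : ℕ) (hb : 1 ≤ b) : Finset.Icc a (b - 1) = Finset.Ico a b := by
  rw [← Finset.Ico_add_one_right_eq_Icc]
  congr 1
  omega

theorem stmt13 (T s : ℕ) (hT : 3 ≤ T) (hs : 2 ≤ s)
    (h1 : ∑ i ∈ Finset.Icc s (T - 1), (1 : ℝ) / i ≤ 1)
    (h2 : 1 < ∑ i ∈ Finset.Icc (s - 1) (T - 1), (1 : ℝ) / i) :
    1 / Real.exp 1 ≤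
      (((s : ℝ) - 1) / (T : ℝ)) * ∑ i ∈ Finset.Icc (s - 1) (T - 1), (1 : ℝ) / i := by
  have he : (0 : ℝ) < Real.exp 1 := Real.exp_pos 1
  have he27 : (27/10 : ℝ) < Real.exp 1 := by
    have := Real.exp_one_gt_d9
    linarith
  by_cases hs2 : s = 2
  · -- finite check: s = 2 forces T ∈ {3, 4}
    subst hs2
    have hT4 : T ≤ 4 := by
      by_contra h'
      push_neg at h'
      have hsub : Finset.Icc (2:ℕ) 4 ⊆ Finset.Icc 2 (T - 1) :=
        Finset.Icc_subset_Icc_right (by omega)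
      have hmono : ∑ i ∈ Finset.Icc (2:ℕ) 4, (1 : ℝ) / i ≤ ∑ i ∈ Finset.Icc (2:ℕ) (T - 1), (1 : ℝ) / i :=
        Finset.sum_le_sum_of_subset_of_nonneg hsub (by intros; positivity)
      have hI : Finset.Icc (2 : ℕ) 4 = {2, 3, 4} := by decide
      rw [hI] at hmono
      norm_num [Finset.sum_insert, Finset.mem_insert] at hmono
      simp only [one_div] at h1
      linarith
    interval_cases T
    · have hI : Finset.Icc (2 - 1 : ℕ) (3 - 1) = {1, 2} := by decide
      rw [hI]
      norm_num [Finset.sum_insert, Finset.mem_insert]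
      rw [inv_eq_one_div, div_le_div_iff₀ he (by norm_num)]
      nlinarith
    · have hI : Finset.Icc (2 - 1 : ℕ) (4 - 1) = {1, 2, 3} := by decide
      rw [hI]
      norm_num [Finset.sum_insert, Finset.mem_insert]
      rw [inv_eq_one_div, div_le_div_iff₀ he (by norm_num)]
      nlinarith
  · -- main case : s ≥ 3
    have hs3 : 3 ≤ s := by omega
    have hT1 : 1 ≤ T := by omega
    rw [icc_eq_ico _ _ hT1] at h1 h2 ⊢
    set S : ℝ := ∑ i ∈ Finset.Ico (s - 1) T, (1 : ℝ) / i with hS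
    clear_value S
    have hsT : s + 1 ≤ T := by
      by_contra hc
      push_neg at hc
      rcases (by omega : s - 1 = T - 1 ∨ T ≤ s - 1) with h | h
      · have hIco : Finset.Ico (s - 1) T = {T - 1} := by
          have hsing := Nat.Ico_succ_singleton (T - 1)
          rw [show (T - 1) + 1 = T by omega] at hsing
          rw [h, hsing]
        rw [hS, hIco, Finset.sum_singleton] at h2
        have hT2 : (2 : ℝ) ≤ ((T - 1 : ℕ) : ℝ) := by
          have : 2 ≤ T - 1 := by omega
          exact_mod_cast this
        have : (1 : ℝ) / ((T - 1 : ℕ) : ℝ) ≤ 1 / 2 := by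
          apply one_div_le_one_div_of_le <;> linarith
        linarith
      · rw [hS, Finset.Ico_eq_empty (by omega), Finset.sum_empty] at h2
        linarith
    set A : ℝ := ((s : ℝ) - 1) with hA
    set B : ℝ := (T : ℝ) with hB
    clear_value A B
    have hcastA : ((s - 1 : ℕ) : ℝ) = A := by
      rw [hA]; push_cast [Nat.cast_sub (by omega : 1 ≤ s)]; ring
    have hA2 : (2 : ℝ) ≤ A := by
      rw [hA]
      have : (3 : ℝ) ≤ (s : ℝ) := by exact_mod_cast hs3
      linarith
    have hA0 : (0 : ℝ) < A := by linarith
    have hA1 : (1 : ℝ) ≤ A := by linarith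
    have hB2 : A + 2 ≤ B := by
      rw [hA, hB]
      have : ((s : ℝ)) + 1 ≤ (T : ℝ) := by exact_mod_cast hsT
      linarith
    have hB0 : (0 : ℝ) < B := by linarith
    have hSlow : Real.log B - Real.log A + 1 / (2 * A) - 1 / (2 * B) ≤ S := by
      have h0 := lemA (s - 1) (by omega) T (by omega)
      rw [hcastA] at h0
      rw [← hB] at h0
      rw [← hS] at h0
      exact h0
    have hS1 : 1 < S := h2
    by_cases hc : B ≤ Real.exp 1 * A
    · -- easy case: A/B ≥ 1/e and S > 1
      have h1e : 1 / Real.exp 1 ≤ A / B := by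
        rw [div_le_div_iff₀ he hB0]
        linarith
      have hAB : 0 < A / B := by positivity
      calc 1 / Real.exp 1 ≤ A / B := h1e
        _ = A / B * 1 := by ring
        _ ≤ A / B * S := by nlinarith
    · push_neg at hc
      have hu0 : 0 < Real.log B - Real.log A - 1 := by
        have : Real.log (Real.exp 1 * A) < Real.log B := Real.log_lt_log (by positivity) hc
        rw [Real.log_mul (ne_of_gt he) (ne_of_gt hA0), Real.log_exp] at this
        linarith
      set u : ℝ := Real.log B - Real.log A - 1 with hudef
      clear_value u
      have hRlow : Real.log B - Real.log ((s : ℕ) : ℝ) + 1 / (2 * ((s : ℕ) : ℝ)) - 1 / (2 * B) ≤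
          ∑ i ∈ Finset.Ico s T, (1 : ℝ) / i := by
        have h0 := lemA s (by omega) T (by omega)
        rw [← hB] at h0
        exact h0
      have hcs : ((s : ℕ) : ℝ) = A + 1 := by rw [hA]; ring
      rw [hcs] at hRlow
      have hkeyA : Real.log (A + 1) - Real.log A ≤ 1 / (2 * A) + 1 / (2 * (A + 1)) :=
        key_ineq A hA1
      have hum : u ≤ 1 / (2 * A) + 1 / (2 * B) := by
        rw [hudef]
        have := le_trans hRlow h1
        linarith
      have hAB1 : 1 / (2 * A) + 1 / (2 * B) ≤ 1 := by
        have h1' : 1 / (2 * A) ≤ 1 / 2 := by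
          apply one_div_le_one_div_of_le <;> linarith
        have h2' : 1 / (2 * B) ≤ 1 / 2 := by
          apply one_div_le_one_div_of_le <;> linarith
        linarith
      have hu1 : |u| ≤ 1 := by
        rw [abs_le]
        constructor <;> linarith
      have hexpu : Real.exp u ≤ 1 + u + 3 / 4 * u ^ 2 := by
        have hb := Real.exp_bound hu1 (by norm_num : 0 < 2)
        have hsum : ∑ i ∈ Finset.range 2, u ^ i / (Nat.factorial i) = 1 + u := by
          simp [Finset.sum_range_succ, Nat.factorial]
        rw [hsum] at hb
        have hb2 : Real.exp u - (1 + u) ≤ |u| ^ 2 * ((2 : ℕ).succ / ((2 : ℕ).factorial * 2)) :=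
          le_trans (le_abs_self _) hb
        have habs : |u| ^ 2 = u ^ 2 := sq_abs u
        rw [habs] at hb2
        norm_num [Nat.factorial] at hb2
        linarith
      have hBe : 27/10 * A ≤ B := by nlinarith
      have hpoly : 3 / 4 * (1 / (2 * A) + 1 / (2 * B)) ^ 2 ≤ 1 / (2 * A) - 1 / (2 * B) :=
        hpoly_aux A B hA2 hBe
      have husq : u ^ 2 ≤ (1 / (2 * A) + 1 / (2 * B)) ^ 2 :=
        pow_le_pow_left₀ (le_of_lt hu0) hum 2
      have hSexp : Real.exp u ≤ S := by
        have hlog : Real.log B - Real.log A = 1 + u := by rw [hudef]; ring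
        rw [hlog] at hSlow
        linarith
      have harg : Real.log B = 1 + Real.log A + u := by rw [hudef]; ring
      have hBeq : B = Real.exp 1 * A * Real.exp u := by
        rw [← Real.exp_log hB0, harg, Real.exp_add, Real.exp_add, Real.exp_log hA0]
      have hBS : B ≤ Real.exp 1 * A * S := by
        rw [hBeq]
        have := mul_le_mul_of_nonneg_left hSexp (by positivity : (0:ℝ) ≤ Real.exp 1 * A)
        linarith [this]
      rw [div_mul_eq_mul_div, div_le_div_iff₀ he hB0]
      ring_nf
      linarith only [hBS]
end

section
/- For α ∈ (0,1] define h_α : [0,1] → ℝ by h_α(x) = x^α · ((1/α + 1)/(1/α + x))^{α+1}. Then: (a) for each fixed x ∈ [0,1], h_α(x) is non-increasing in α; (b) for each fixed α ∈ (0,1], h_α(x) is non-decreasing in x; and (c) h_α(x) < 1 for every α ∈ (0,1] and x ∈ [0,1). -/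
/-- `h_α(x) = x^α ((1/α + 1)/(1/α + x))^{α+1}` (real powers). -/
noncomputable def hfun (α x : ℝ) : ℝ := x ^ α * ((1 / α + 1) / (1 / α + x)) ^ (α + 1)

noncomputable def gfun (α x : ℝ) : ℝ :=
  α * Real.log x + (α + 1) * (Real.log (1 + α) - Real.log (1 + α * x))

lemma hfun_eq {α x : ℝ} (hα : 0 < α) (hx : 0 < x) :
    hfun α x = Real.exp (gfun α x) := by
  have h1 : (0:ℝ) < 1 + α := by linarith
  have h2 : (0:ℝ) < 1 + α * x := by positivity
  have h3 : (0:ℝ) < 1 / α + x := by positivity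
  have key : (1 / α + 1) / (1 / α + x) = (1 + α) / (1 + α * x) := by
    rw [div_eq_div_iff (ne_of_gt h3) (ne_of_gt h2)]
    field_simp
  rw [hfun, key, Real.rpow_def_of_pos hx, Real.rpow_def_of_pos (by positivity),
    Real.log_div (ne_of_gt h1) (ne_of_gt h2), ← Real.exp_add, gfun]
  ring_nf

lemma log_le_pade {x : ℝ} (hx : 0 < x) (hx1 : x ≤ 1) :
    Real.log x ≤ 2 * (x - 1) / (x + 1) := by
  set f : ℝ → ℝ := fun t => 2 * (t - 1) / (t + 1) - Real.log t with hf
  have hder : ∀ t : ℝ, 0 < t →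
      HasDerivAt f (4 / (t + 1) ^ 2 - 1 / t) t := by
    intro t ht
    have h1 : t + 1 ≠ 0 := by positivity
    have d1 : HasDerivAt (fun s : ℝ => 2 * (s - 1) / (s + 1)) (4 / (t + 1) ^ 2) t := by
      have du : HasDerivAt (fun s : ℝ => 2 * (s - 1)) 2 t := by
        simpa using ((hasDerivAt_id t).sub_const 1).const_mul 2
      have dv : HasDerivAt (fun s : ℝ => s + 1) 1 t := (hasDerivAt_id t).add_const 1
      have := du.div dv h1
      refine this.congr_deriv ?_
      field_simp
      ring
    have d2 : HasDerivAt Real.log (1 / t) t := by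
      simpa [one_div] using Real.hasDerivAt_log (ne_of_gt ht)
    exact d1.sub d2
  have hanti : AntitoneOn f (Set.Icc x 1) := by
    apply antitoneOn_of_deriv_nonpos (convex_Icc x 1)
    · intro t ht
      exact ((hder t (lt_of_lt_of_le hx ht.1)).differentiableAt).continuousAt.continuousWithinAt
    · intro t ht
      rw [interior_Icc] at ht
      exact ((hder t (lt_trans hx ht.1)).differentiableAt).differentiableWithinAt
    · intro t ht
      rw [interior_Icc] at ht
      have ht0 : 0 < t := lt_trans hx ht.1
      rw [(hder t ht0).deriv]
      rw [sub_nonpos, div_le_div_iff₀ (by positivity) ht0]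
      nlinarith [sq_nonneg (t - 1), ht0.le]
  have key := hanti (Set.mem_Icc.mpr ⟨le_refl x, hx1⟩) (Set.mem_Icc.mpr ⟨hx1, le_refl 1⟩) hx1
  simp only [hf, Real.log_one] at key
  have : (0:ℝ) ≤ 2 * (x - 1) / (x + 1) - Real.log x := by simpa using key
  linarith

lemma hasDerivAt_g_alpha {x α : ℝ} (hx : 0 < x) (hα : 0 < α) :
    HasDerivAt (fun a => gfun a x)
      (Real.log x + (Real.log (1 + α) - Real.log (1 + α * x)) + (1 - x) / (1 + α * x)) α := by
  have h1 : (0:ℝ) < 1 + α := by linarith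
  have h2 : (0:ℝ) < 1 + α * x := by positivity
  have d1 : HasDerivAt (fun a : ℝ => a * Real.log x) (Real.log x) α := by
    simpa using (hasDerivAt_id α).mul_const (Real.log x)
  have d2 : HasDerivAt (fun a : ℝ => Real.log (1 + a)) (1 / (1 + α)) α := by
    have hi : HasDerivAt (fun a : ℝ => 1 + a) 1 α := (hasDerivAt_id α).const_add 1
    simpa [one_div, Function.comp_def] using (Real.hasDerivAt_log (ne_of_gt h1)).comp α hi
  have d3 : HasDerivAt (fun a : ℝ => Real.log (1 + a * x)) (x / (1 + α * x)) α := by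
    have hi : HasDerivAt (fun a : ℝ => 1 + a * x) x α := by
      simpa using ((hasDerivAt_id α).mul_const x).const_add 1
    have := (Real.hasDerivAt_log (ne_of_gt h2)).comp α hi
    simpa [div_eq_inv_mul, mul_comm, Function.comp_def] using this
  have d4 : HasDerivAt (fun a : ℝ => (a + 1) * (Real.log (1 + a) - Real.log (1 + a * x)))
      (1 * (Real.log (1 + α) - Real.log (1 + α * x)) +
        (α + 1) * (1 / (1 + α) - x / (1 + α * x))) α :=
    ((hasDerivAt_id α).add_const 1).mul (d2.sub d3)
  have := d1.add d4
  refine this.congr_deriv ?_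
  field_simp
  ring

lemma hasDerivAt_g_x {α x : ℝ} (hα : 0 < α) (hx : 0 < x) :
    HasDerivAt (fun t => gfun α t) (α / x - (α + 1) * (α / (1 + α * x))) x := by
  have h2 : (0:ℝ) < 1 + α * x := by positivity
  have d1 : HasDerivAt (fun t : ℝ => α * Real.log t) (α / x) x := by
    have := (Real.hasDerivAt_log (ne_of_gt hx)).const_mul α
    simpa [div_eq_inv_mul, mul_comm] using this
  have d3 : HasDerivAt (fun t : ℝ => Real.log (1 + α * t)) (α / (1 + α * x)) x := by
    have hi : HasDerivAt (fun t : ℝ => 1 + α * t) α x := by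
      simpa using ((hasDerivAt_id x).const_mul α).const_add 1
    have := (Real.hasDerivAt_log (ne_of_gt h2)).comp x hi
    simpa [div_eq_inv_mul, mul_comm, Function.comp_def] using this
  have d4 : HasDerivAt (fun t : ℝ => (α + 1) * (Real.log (1 + α) - Real.log (1 + α * t)))
      ((α + 1) * (0 - α / (1 + α * x))) x :=
    ((hasDerivAt_const x (Real.log (1 + α))).sub d3).const_mul (α + 1)
  have := d1.add d4
  refine this.congr_deriv ?_
  ring

/-- Sign of the α-derivative: nonpositive for x ∈ (0,1], α ∈ (0,1]. -/
lemma g_alpha_deriv_nonpos {x α : ℝ} (hx : 0 < x) (hx1 : x ≤ 1) (hα : 0 < α) (hα1 : α ≤ 1) :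
    Real.log x + (Real.log (1 + α) - Real.log (1 + α * x)) + (1 - x) / (1 + α * x) ≤ 0 := by
  have h1 : (0:ℝ) < 1 + α := by linarith
  have h2 : (0:ℝ) < 1 + α * x := by positivity
  have step1 : Real.log (1 + α) - Real.log (1 + α * x) ≤ α * (1 - x) / (1 + α * x) := by
    rw [← Real.log_div (ne_of_gt h1) (ne_of_gt h2)]
    have := Real.log_le_sub_one_of_pos (show (0:ℝ) < (1 + α) / (1 + α * x) by positivity)
    have heq : (1 + α) / (1 + α * x) - 1 = α * (1 - x) / (1 + α * x) := by
      field_simp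
      ring
    linarith [heq ▸ this]
  have step2 : (α + 1) * (1 - x) / (1 + α * x) ≤ 2 * (1 - x) / (1 + x) := by
    rw [div_le_div_iff₀ h2 (by linarith)]
    nlinarith [mul_nonneg (sub_nonneg.mpr hα1) (sq_nonneg (1 - x))]
  have step3 : Real.log x ≤ 2 * (x - 1) / (x + 1) := log_le_pade hx hx1
  have e1 : 2 * (x - 1) / (x + 1) = -(2 * (1 - x) / (1 + x)) := by ring_nf
  have comb : α * (1 - x) / (1 + α * x) + (1 - x) / (1 + α * x)
      = (α + 1) * (1 - x) / (1 + α * x) := by ring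
  linarith [step1, step2, step3, e1 ▸ step3]

/-- g at x = 1 is 0. -/
lemma gfun_one (α : ℝ) : gfun α 1 = 0 := by
  simp [gfun]

theorem stmt14 :
    (∀ x ∈ Set.Icc (0 : ℝ) 1, ∀ α β : ℝ, 0 < α → α ≤ β → β ≤ 1 → hfun β x ≤ hfun α x) ∧
    (∀ α : ℝ, 0 < α → α ≤ 1 →
      ∀ x y : ℝ, 0 ≤ x → x ≤ y → y ≤ 1 → hfun α x ≤ hfun α y) ∧
    (∀ α x : ℝ, 0 < α → α ≤ 1 → 0 ≤ x → x < 1 → hfun α x < 1) := by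
  refine ⟨?_, ?_, ?_⟩
  · -- (a) antitone in α
    rintro x ⟨hx0, hx1⟩ α β hα hαβ hβ1
    have hβ : 0 < β := lt_of_lt_of_le hα hαβ
    rcases eq_or_lt_of_le hx0 with h0 | hxpos
    · -- x = 0
      subst h0
      rw [hfun, hfun, Real.zero_rpow (ne_of_gt hα), Real.zero_rpow (ne_of_gt hβ),
        zero_mul, zero_mul]
    · -- x > 0 : gfun is antitone in α on [α, β]
      have hanti : AntitoneOn (fun a => gfun a x) (Set.Icc α β) := by
        apply antitoneOn_of_deriv_nonpos (convex_Icc α β)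
        · intro t ht
          exact ((hasDerivAt_g_alpha hxpos (lt_of_lt_of_le hα ht.1)).differentiableAt).continuousAt.continuousWithinAt
        · intro t ht
          rw [interior_Icc] at ht
          exact ((hasDerivAt_g_alpha hxpos (lt_trans hα ht.1)).differentiableAt).differentiableWithinAt
        · intro t ht
          rw [interior_Icc] at ht
          have ht0 : 0 < t := lt_trans hα ht.1
          have ht1 : t ≤ 1 := le_of_lt (lt_of_lt_of_le ht.2 hβ1)
          rw [(hasDerivAt_g_alpha hxpos ht0).deriv]
          exact g_alpha_deriv_nonpos hxpos hx1 ht0 ht1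
      have := hanti (Set.mem_Icc.mpr ⟨le_refl α, hαβ⟩) (Set.mem_Icc.mpr ⟨hαβ, le_refl β⟩) hαβ
      rw [hfun_eq hα hxpos, hfun_eq hβ hxpos]
      exact Real.exp_le_exp.mpr this
  · -- (b) monotone in x
    intro α hα hα1 x y hx0 hxy hy1
    rcases eq_or_lt_of_le hx0 with h0 | hxpos
    · subst h0
      rw [hfun, Real.zero_rpow (ne_of_gt hα), zero_mul]
      have h3 : (0:ℝ) ≤ 1 / α + y := by positivity
      have h4 : (0:ℝ) ≤ (1 / α + 1) / (1 / α + y) := by positivity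
      exact mul_nonneg (Real.rpow_nonneg (le_trans hx0 hxy) _) (Real.rpow_nonneg h4 _)
    · have hmono : MonotoneOn (fun t => gfun α t) (Set.Icc x y) := by
        apply monotoneOn_of_deriv_nonneg (convex_Icc x y)
        · intro t ht
          exact ((hasDerivAt_g_x hα (lt_of_lt_of_le hxpos ht.1)).differentiableAt).continuousAt.continuousWithinAt
        · intro t ht
          rw [interior_Icc] at ht
          exact ((hasDerivAt_g_x hα (lt_trans hxpos ht.1)).differentiableAt).differentiableWithinAt
        · intro t ht
          rw [interior_Icc] at ht
          have ht0 : 0 < t := lt_trans hxpos ht.1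
          have ht1 : t ≤ 1 := le_of_lt (lt_of_lt_of_le ht.2 hy1)
          rw [(hasDerivAt_g_x hα ht0).deriv, sub_nonneg, ← mul_div_assoc,
            div_le_div_iff₀ (by positivity) ht0]
          nlinarith [mul_le_mul_of_nonneg_left ht1 hα.le]
      have := hmono (Set.mem_Icc.mpr ⟨le_refl x, hxy⟩) (Set.mem_Icc.mpr ⟨hxy, le_refl y⟩) hxy
      rw [hfun_eq hα hxpos, hfun_eq hα (lt_of_lt_of_le hxpos hxy)]
      exact Real.exp_le_exp.mpr this
  · -- (c) hfun α x < 1 for x < 1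
    intro α x hα hα1 hx0 hx1
    rcases eq_or_lt_of_le hx0 with h0 | hxpos
    · subst h0
      rw [hfun, Real.zero_rpow (ne_of_gt hα), zero_mul]
      norm_num
    · have hmono : StrictMonoOn (fun t => gfun α t) (Set.Icc x 1) := by
        apply strictMonoOn_of_deriv_pos (convex_Icc x 1)
        · intro t ht
          exact ((hasDerivAt_g_x hα (lt_of_lt_of_le hxpos ht.1)).differentiableAt).continuousAt.continuousWithinAt
        · intro t ht
          rw [interior_Icc] at ht
          have ht0 : 0 < t := lt_trans hxpos ht.1
          rw [(hasDerivAt_g_x hα ht0).deriv, sub_pos, ← mul_div_assoc,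
            div_lt_div_iff₀ (by positivity) ht0]
          nlinarith [mul_lt_mul_of_pos_left ht.2 hα]
      have hlt : gfun α x < gfun α 1 :=
        hmono (Set.mem_Icc.mpr ⟨le_refl x, hx1.le⟩) (Set.mem_Icc.mpr ⟨hx1.le, le_refl 1⟩) hx1
      rw [gfun_one] at hlt
      rw [hfun_eq hα hxpos]
      calc Real.exp (gfun α x) < Real.exp 0 := Real.exp_lt_exp.mpr hlt
        _ = 1 := Real.exp_zero
end

section
/- Let (Ω, F, P) be a probability space, n ∈ ℕ, and X_1,...,X_n integrable real random variables. Let (F_i)_{i=1}^n and (G_i)_{i=1}^n be increasing families of sub-σ-algebras of F with G_i ⊆ F_i for every i. Set X̃_i = E[X_i | F_i] and Ỹ_i = E[X_i | G_i], and define backward recursions V_F^{(n)} = X̃_n, V_F^{(i)} = max(X̃_i, E[V_F^{(i+1)} | F_i]) for i < n, and similarly V_G^{(n)} = Ỹ_n, V_G^{(i)} = max(Ỹ_i, E[V_G^{(i+1)} | G_i]) for i < n. Then V_G^{(i)} ≤ E[V_F^{(i)} | G_i] almost surely for every i ∈ {1,...,n}; in particular E[V_G^{(1)}] ≤ E[V_F^{(1)}].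 -/
open MeasureTheory

theorem stmt16 {Ω : Type*} [m0 : MeasurableSpace Ω] (P : Measure Ω)
    [IsProbabilityMeasure P] (n : ℕ) (hn : 0 < n)
    (X : Fin n → Ω → ℝ) (hX : ∀ i, Integrable (X i) P)
    (F G : Fin n → MeasurableSpace Ω)
    (hF : Monotone F) (hG : Monotone G)
    (hFle : ∀ i, F i ≤ m0) (hGF : ∀ i, G i ≤ F i)
    (V W : Fin n → Ω → ℝ)
    (hVn : V ⟨n - 1, by omega⟩ =ᵐ[P] P[X ⟨n - 1, by omega⟩ | F ⟨n - 1, by omega⟩])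
    (hVi : ∀ (i : Fin n) (h : (i : ℕ) + 1 < n),
      V i =ᵐ[P] fun ω => max ((P[X i | F i]) ω) ((P[V ⟨(i : ℕ) + 1, h⟩ | F i]) ω))
    (hWn : W ⟨n - 1, by omega⟩ =ᵐ[P] P[X ⟨n - 1, by omega⟩ | G ⟨n - 1, by omega⟩])
    (hWi : ∀ (i : Fin n) (h : (i : ℕ) + 1 < n),
      W i =ᵐ[P] fun ω => max ((P[X i | G i]) ω) ((P[W ⟨(i : ℕ) + 1, h⟩ | G i]) ω)) :
    (∀ i : Fin n, W i ≤ᵐ[P] P[V i | G i]) ∧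
    ∫ ω, W ⟨0, hn⟩ ω ∂P ≤ ∫ ω, V ⟨0, hn⟩ ω ∂P := by
  have hGle : ∀ i, G i ≤ m0 := fun i => (hGF i).trans (hFle i)
  -- main claim by downward induction
  have key : ∀ k, ∀ i : Fin n, n - 1 - (i : ℕ) ≤ k →
      Integrable (V i) P ∧ Integrable (W i) P ∧ W i ≤ᵐ[P] P[V i | G i] := by
    intro k
    induction k with
    | zero =>
        intro i hi
        have hieq : (i : ℕ) = n - 1 := by have := i.isLt; omega
        have hi' : (⟨n - 1, by omega⟩ : Fin n) = i := by
          ext; simp [hieq]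
        rw [hi'] at hVn hWn
        refine ⟨integrable_condExp.congr hVn.symm, integrable_condExp.congr hWn.symm, ?_⟩
        calc W i =ᵐ[P] P[X i | G i] := hWn
          _ =ᵐ[P] P[P[X i | F i] | G i] := (condExp_condExp_of_le (hGF i) (hFle i)).symm
          _ ≤ᵐ[P] P[V i | G i] := (condExp_congr_ae hVn.symm).le
    | succ k ih =>
        intro i hi
        by_cases h : (i : ℕ) + 1 < n
        · set i' : Fin n := ⟨(i : ℕ) + 1, h⟩ with hi'def
          have hii' : i ≤ i' := by
            simp only [Fin.le_def, hi'def]; omega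
          obtain ⟨hVint', hWint', hle'⟩ := ih i' (by simp [hi'def]; omega)
          have hVeq := hVi i h
          have hWeq := hWi i h
          have hVint : Integrable (V i) P :=
            (Integrable.sup (integrable_condExp (f := X i) (m := F i))
              (integrable_condExp (f := V i') (m := F i))).congr hVeq.symm
          have hWint : Integrable (W i) P :=
            (Integrable.sup (integrable_condExp (f := X i) (m := G i))
              (integrable_condExp (f := W i') (m := G i))).congr hWeq.symm
          refine ⟨hVint, hWint, ?_⟩
          -- P[X i|F i] ≤ᵐ V i and P[V i'|F i] ≤ᵐ V i
          have h1 : (P[X i | F i] : Ω → ℝ) ≤ᵐ[P] V i := by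
            filter_upwards [hVeq] with ω hω
            rw [hω]; exact le_max_left _ _
          have h2 : (P[V i' | F i] : Ω → ℝ) ≤ᵐ[P] V i := by
            filter_upwards [hVeq] with ω hω
            rw [hω]; exact le_max_right _ _
          have hA : (P[X i | G i] : Ω → ℝ) ≤ᵐ[P] P[V i | G i] :=
            (condExp_condExp_of_le (hGF i) (hFle i)).symm.trans_le
              (condExp_mono integrable_condExp hVint h1)
          have hB : (P[W i' | G i] : Ω → ℝ) ≤ᵐ[P] P[V i | G i] := by
            calc (P[W i' | G i] : Ω → ℝ)
                ≤ᵐ[P] P[P[V i' | G i'] | G i] :=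
                  condExp_mono hWint' integrable_condExp hle'
              _ =ᵐ[P] P[V i' | G i] := condExp_condExp_of_le (hG hii') (hGle i')
              _ =ᵐ[P] P[P[V i' | F i] | G i] :=
                  (condExp_condExp_of_le (hGF i) (hFle i)).symm
              _ ≤ᵐ[P] P[V i | G i] := condExp_mono integrable_condExp hVint h2
          filter_upwards [hWeq, hA, hB] with ω hω hA hB
          rw [hω]; exact max_le hA hB
        · have hieq : (i : ℕ) = n - 1 := by have := i.isLt; omega
          have hi' : (⟨n - 1, by omega⟩ : Fin n) = i := by ext; simp [hieq]
          rw [hi'] at hVn hWn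
          refine ⟨integrable_condExp.congr hVn.symm, integrable_condExp.congr hWn.symm, ?_⟩
          calc W i =ᵐ[P] P[X i | G i] := hWn
            _ =ᵐ[P] P[P[X i | F i] | G i] := (condExp_condExp_of_le (hGF i) (hFle i)).symm
            _ ≤ᵐ[P] P[V i | G i] := (condExp_congr_ae hVn.symm).le
  have main : ∀ i : Fin n, Integrable (V i) P ∧ Integrable (W i) P ∧ W i ≤ᵐ[P] P[V i | G i] :=
    fun i => key (n - 1 - (i : ℕ)) i le_rfl
  refine ⟨fun i => (main i).2.2, ?_⟩
  obtain ⟨hVint, hWint, hle⟩ := main ⟨0, hn⟩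
  calc ∫ ω, W ⟨0, hn⟩ ω ∂P ≤ ∫ ω, (P[V ⟨0, hn⟩ | G ⟨0, hn⟩]) ω ∂P :=
        integral_mono_ae hWint integrable_condExp hle
    _ = ∫ ω, V ⟨0, hn⟩ ω ∂P := integral_condExp (hGle _)
end

section
/- Fix n ≥ 3. Define B_n = sup over q_2,...,q_n ∈ [0,1] of (1/n)·Σ_{i=2}^{n} (∏_{j=2}^{i−1} (1 − q_j/j))·q_i, and assume B_n ≥ 1/e (which holds for all n ≥ 3). Set s* = (B_n − 1/n)/(1 + B_n − 1/n), and for s ∈ [0,1] let w^{(n,s)} be the distribution with w_1 = s, w_n = 1 − s, and w_i = 0 otherwise. Then for every 0 < ε < min(s*, 1 − s*), there is no strategy q satisfying simultaneously A(w^{(n,s*+ε)}, q) ≥ sup_{q'} A(w^{(n,s*+ε)}, q') − ε/3 and A(w^{(n,s*−ε)}, q) ≥ sup_{q'} A(w^{(n,s*−ε)}, q') − ε/3. -/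
open scoped BigOperators

/-- The supremum of `A p q` over all strategies `q`. -/
noncomputable def supA (p : ℕ → ℝ) : ℝ :=
  sSup {y | ∃ q : ℕ → ℝ, (∀ i, 1 ≤ i → q i ∈ Set.Icc (0 : ℝ) 1) ∧ y = A p q}

/-- The distribution `w^{(n,s)}` supported on `{1, n}` with `w_1 = s`, `w_n = 1 - s`. -/
noncomputable def w (n : ℕ) (s : ℝ) : ℕ → ℝ := fun i =>
  if i = 1 then s else if i = n then 1 - s else 0

noncomputable def CC (n : ℕ) (q : ℕ → ℝ) : ℝ :=
  (1 / (n : ℝ)) * ∑ i ∈ Finset.Icc 2 n, (∏ j ∈ Finset.Icc 2 (i - 1), (1 - q j / (j : ℝ))) * q i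

lemma lam_w_eq {n : ℕ} (hn : 3 ≤ n) (s : ℝ) (i : ℕ) :
    lam (w n s) i = (if i ≤ 1 then s else 0) + (if i ≤ n then (1 - s) / n else 0) := by
  have hn1 : n ≠ 1 := by omega
  have key : ∀ l ∉ ({1, n} : Finset ℕ), (if i ≤ l then w n s l / (l : ℝ) else 0) = 0 := by
    intro l hl
    simp only [Finset.mem_insert, Finset.mem_singleton, not_or] at hl
    simp [w, hl.1, hl.2]
  rw [lam, tsum_eq_sum key, Finset.sum_insert (by simp [Ne.symm hn1]), Finset.sum_singleton]
  rw [show w n s 1 = s by simp [w], show w n s n = 1 - s by simp [w, hn1]]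
  split_ifs <;> norm_num

lemma A_w_eq {n : ℕ} (hn : 3 ≤ n) (s : ℝ) (q : ℕ → ℝ) :
    A (w n s) q = q 1 * (s + (1 - s) / n) + (1 - q 1) * ((1 - s) * CC n q) := by
  have key : ∀ i ∉ Finset.range n, U q i * q (i + 1) * lam (w n s) (i + 1) = 0 := by
    intro i hi
    simp only [Finset.mem_range, not_lt] at hi
    rw [lam_w_eq hn]
    have h1 : ¬ (i + 1 ≤ 1) := by omega
    have h2 : ¬ (i + 1 ≤ n) := by omega
    simp [h1, h2]
  rw [A, tsum_eq_sum key, Finset.range_eq_Ico,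
    Finset.sum_eq_sum_Ico_succ_bot (by omega : 0 < n)]
  have h0 : U q 0 * q 1 * lam (w n s) 1 = q 1 * (s + (1 - s) / n) := by
    rw [lam_w_eq hn]
    have : (1:ℕ) ≤ n := by omega
    simp [U, this]
  rw [h0]
  congr 1
  have hterm : ∀ i ∈ Finset.Ico 1 n,
      U q i * q (i + 1) * lam (w n s) (i + 1) =
        (1 - q 1) * (∏ j ∈ Finset.Ico 2 (i + 1), (1 - q j / (j : ℝ))) * q (i + 1) * ((1 - s) / n) := by
    intro i hi
    simp only [Finset.mem_Ico] at hi
    rw [lam_w_eq hn]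
    have h1 : ¬ (i + 1 ≤ 1) := by omega
    have h2 : i + 1 ≤ n := by omega
    rw [if_neg h1, if_pos h2]
    have hU : U q i = (1 - q 1) * ∏ j ∈ Finset.Ico 2 (i + 1), (1 - q j / (j : ℝ)) := by
      rw [U, show Finset.Icc 1 i = Finset.Ico 1 (i + 1) from (Finset.Ico_add_one_right_eq_Icc 1 i).symm,
        Finset.prod_eq_prod_Ico_succ_bot (by omega : 1 < i + 1)]
      norm_num
    rw [hU]; ring
  rw [Finset.sum_congr rfl hterm]
  rw [CC, show (1 - q 1) * ((1 - s) * ((1 / (n:ℝ)) * ∑ i ∈ Finset.Icc 2 n,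
      (∏ j ∈ Finset.Icc 2 (i - 1), (1 - q j / (j : ℝ))) * q i))
    = ∑ i ∈ Finset.Icc 2 n, (1 - q 1) * (∏ j ∈ Finset.Icc 2 (i - 1), (1 - q j / (j : ℝ))) * q i * ((1 - s) / n)
    from by rw [Finset.mul_sum, Finset.mul_sum, Finset.mul_sum]; exact Finset.sum_congr rfl fun i _ => by ring]
  rw [show Finset.Icc 2 n = Finset.Ico 2 (n + 1) from (Finset.Ico_add_one_right_eq_Icc 2 n).symm,
    Finset.sum_Ico_eq_sum_range, Finset.sum_Ico_eq_sum_range]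
  refine Finset.sum_congr (by congr 1) (fun k _ => ?_)
  have e1 : 2 + k - 1 = k + 1 := by omega
  have e2 : 1 + k + 1 = k + 2 := by omega
  have e3 : 2 + k = k + 2 := by omega
  rw [e1, e2, e3, show Finset.Icc 2 (k+1) = Finset.Ico 2 (k + 2) from (Finset.Ico_add_one_right_eq_Icc 2 (k+1)).symm]

lemma factor_mem {q : ℕ → ℝ} (hq : ∀ i, 1 ≤ i → q i ∈ Set.Icc (0 : ℝ) 1)
    {j : ℕ} (hj : 1 ≤ j) : (1 - q j / (j : ℝ)) ∈ Set.Icc (0 : ℝ) 1 := by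
  have hjpos : (0 : ℝ) < j := by exact_mod_cast hj
  have h := hq j hj
  constructor
  · have : q j / (j : ℝ) ≤ 1 := by
      rw [div_le_one hjpos]
      have : (1:ℝ) ≤ (j:ℝ) := by exact_mod_cast hj
      linarith [h.2]
    linarith
  · have : 0 ≤ q j / (j : ℝ) := div_nonneg h.1 hjpos.le
    linarith

lemma CC_nonneg (n : ℕ) {q : ℕ → ℝ} (hq : ∀ i, 1 ≤ i → q i ∈ Set.Icc (0 : ℝ) 1) :
    0 ≤ CC n q := by
  rw [CC]
  apply mul_nonneg (by positivity)
  apply Finset.sum_nonneg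
  intro i hi
  simp only [Finset.mem_Icc] at hi
  apply mul_nonneg
  · exact Finset.prod_nonneg fun j hj => (factor_mem hq (by simp only [Finset.mem_Icc] at hj; omega)).1
  · exact (hq i (by omega)).1

lemma CC_le_one (n : ℕ) (hn : 1 ≤ n) {q : ℕ → ℝ} (hq : ∀ i, 1 ≤ i → q i ∈ Set.Icc (0 : ℝ) 1) :
    CC n q ≤ 1 := by
  have hsum : ∑ i ∈ Finset.Icc 2 n, (∏ j ∈ Finset.Icc 2 (i - 1), (1 - q j / (j : ℝ))) * q i ≤ (n : ℝ) := by
    calc ∑ i ∈ Finset.Icc 2 n, (∏ j ∈ Finset.Icc 2 (i - 1), (1 - q j / (j : ℝ))) * q i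
        ≤ ∑ i ∈ Finset.Icc 2 n, 1 := by
          apply Finset.sum_le_sum
          intro i hi
          simp only [Finset.mem_Icc] at hi
          have hi1 : 1 ≤ i := by omega
          apply mul_le_one₀
          · exact Finset.prod_le_one
              (fun j hj => (factor_mem hq (by simp only [Finset.mem_Icc] at hj; omega)).1)
              (fun j hj => (factor_mem hq (by simp only [Finset.mem_Icc] at hj; omega)).2)
          · exact (hq i hi1).1
          · exact (hq i hi1).2
      _ ≤ (n : ℝ) := by
          rw [Finset.sum_const, Nat.card_Icc]
          simp only [nsmul_eq_mul, mul_one]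
          have : n + 1 - 2 ≤ n := by omega
          exact_mod_cast this
  have hnpos : (0 : ℝ) < n := by exact_mod_cast hn
  rw [CC]
  calc (1 / (n : ℝ)) * ∑ i ∈ Finset.Icc 2 n, (∏ j ∈ Finset.Icc 2 (i - 1), (1 - q j / (j : ℝ))) * q i
      ≤ (1 / (n : ℝ)) * n := by apply mul_le_mul_of_nonneg_left hsum (by positivity)
    _ = 1 := by field_simp

lemma supA_bdd {n : ℕ} (hn : 3 ≤ n) {s : ℝ} (hs : 0 ≤ s) (hs1 : s ≤ 1) :
    BddAbove {y | ∃ q : ℕ → ℝ, (∀ i, 1 ≤ i → q i ∈ Set.Icc (0 : ℝ) 1) ∧ y = A (w n s) q} := by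
  refine ⟨2, ?_⟩
  rintro y ⟨q, hq, rfl⟩
  rw [A_w_eq hn]
  have h1 := hq 1 le_rfl
  have hC0 := CC_nonneg n hq
  have hC1 := CC_le_one n (by omega) hq
  have hn3 : (3:ℝ) ≤ n := by exact_mod_cast hn
  have hnpos : (0:ℝ) < n := by linarith
  have hdiv : (1 - s) / (n : ℝ) ≤ 1 - s := div_le_self (by linarith) (by linarith)
  have hdiv0 : 0 ≤ (1 - s) / (n : ℝ) := div_nonneg (by linarith) hnpos.le
  have hM1 : s + (1 - s) / (n : ℝ) ≤ 1 := by linarith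
  have hM0 : 0 ≤ s + (1 - s) / (n : ℝ) := by linarith
  have t1 : q 1 * (s + (1 - s) / (n:ℝ)) ≤ 1 := mul_le_one₀ h1.2 hM0 hM1
  have t2 : (1 - s) * CC n q ≤ 1 := mul_le_one₀ (by linarith) hC0 hC1
  have t3 : (1 - q 1) * ((1 - s) * CC n q) ≤ 1 :=
    mul_le_one₀ (by linarith [h1.1]) (mul_nonneg (by linarith) hC0) t2
  linarith

lemma supA_ge {n : ℕ} (hn : 3 ≤ n) {s : ℝ} (hs : 0 ≤ s) (hs1 : s ≤ 1) :
    s + (1 - s) / n ≤ supA (w n s) := by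
  set q0 : ℕ → ℝ := fun i => if i = 1 then 1 else 0 with hq0
  have hstrat : ∀ i, 1 ≤ i → q0 i ∈ Set.Icc (0 : ℝ) 1 := by
    intro i _; by_cases h : i = 1 <;> simp [q0, h]
  have hval : A (w n s) q0 = s + (1 - s) / n := by
    rw [A_w_eq hn]
    simp [q0]
  rw [supA]
  exact le_csSup (supA_bdd hn hs hs1) ⟨q0, hstrat, hval.symm⟩

lemma supA_ge_B {n : ℕ} (hn : 3 ≤ n) {s : ℝ} (hs : 0 ≤ s) (hs1 : s < 1) (B : ℝ)
    (hB : B = sSup {y | ∃ q : ℕ → ℝ, (∀ i, 1 ≤ i → q i ∈ Set.Icc (0 : ℝ) 1) ∧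
      y = (1 / (n : ℝ)) * ∑ i ∈ Finset.Icc 2 n,
        (∏ j ∈ Finset.Icc 2 (i - 1), (1 - q j / (j : ℝ))) * q i}) :
    (1 - s) * B ≤ supA (w n s) := by
  subst hB
  rw [mul_comm, ← le_div_iff₀ (by linarith : (0:ℝ) < 1 - s)]
  have h0mem : (0:ℝ) ∈ {y | ∃ q : ℕ → ℝ, (∀ i, 1 ≤ i → q i ∈ Set.Icc (0 : ℝ) 1) ∧
      y = (1 / (n : ℝ)) * ∑ i ∈ Finset.Icc 2 n,
        (∏ j ∈ Finset.Icc 2 (i - 1), (1 - q j / (j : ℝ))) * q i} :=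
    ⟨fun _ => 0, fun i _ => by norm_num, by simp⟩
  apply csSup_le ⟨0, h0mem⟩
  rintro y ⟨q, hq, rfl⟩
  rw [le_div_iff₀ (by linarith : (0:ℝ) < 1 - s)]
  set q' : ℕ → ℝ := fun i => if i = 1 then 0 else q i with hq'def
  have hq' : ∀ i, 1 ≤ i → q' i ∈ Set.Icc (0 : ℝ) 1 := by
    intro i hi; by_cases h : i = 1
    · simp [q', h]
    · simp only [q', if_neg h]; exact hq i hi
  have hCC : CC n q' = CC n q := by
    rw [CC, CC]
    congr 1
    apply Finset.sum_congr rfl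
    intro i hi
    simp only [Finset.mem_Icc] at hi
    have hqi : q' i = q i := by simp [q', show i ≠ 1 by omega]
    rw [hqi]
    congr 1
    apply Finset.prod_congr rfl
    intro j hj
    simp only [Finset.mem_Icc] at hj
    simp [q', show j ≠ 1 by omega]
  have hval : A (w n s) q' = (1 - s) *
      ((1 / (n : ℝ)) * ∑ i ∈ Finset.Icc 2 n, (∏ j ∈ Finset.Icc 2 (i - 1), (1 - q j / (j : ℝ))) * q i) := by
    rw [A_w_eq hn]
    have h1 : q' 1 = 0 := by simp [q']
    rw [h1, hCC, CC]
    ring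
  calc (1 / (n : ℝ) * ∑ i ∈ Finset.Icc 2 n, (∏ j ∈ Finset.Icc 2 (i - 1), (1 - q j / (j:ℝ))) * q i) * (1 - s)
      = A (w n s) q' := by rw [hval]; ring
    _ ≤ supA (w n s) := by rw [supA]; exact le_csSup (supA_bdd hn hs hs1.le) ⟨q', hq', rfl⟩

lemma CC_le_B {n : ℕ} (hn : 3 ≤ n) {q : ℕ → ℝ} (hq : ∀ i, 1 ≤ i → q i ∈ Set.Icc (0 : ℝ) 1) (B : ℝ)
    (hB : B = sSup {y | ∃ q : ℕ → ℝ, (∀ i, 1 ≤ i → q i ∈ Set.Icc (0 : ℝ) 1) ∧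
      y = (1 / (n : ℝ)) * ∑ i ∈ Finset.Icc 2 n,
        (∏ j ∈ Finset.Icc 2 (i - 1), (1 - q j / (j : ℝ))) * q i}) :
    CC n q ≤ B := by
  subst hB
  apply le_csSup
  · refine ⟨1, ?_⟩
    rintro y ⟨q', hq', rfl⟩
    exact CC_le_one n (by omega) hq'
  · exact ⟨q, hq, rfl⟩

theorem stmt18 (n : ℕ) (hn : 3 ≤ n) (B : ℝ)
    (hB : B = sSup {y | ∃ q : ℕ → ℝ, (∀ i, 1 ≤ i → q i ∈ Set.Icc (0 : ℝ) 1) ∧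
      y = (1 / (n : ℝ)) * ∑ i ∈ Finset.Icc 2 n,
        (∏ j ∈ Finset.Icc 2 (i - 1), (1 - q j / (j : ℝ))) * q i})
    (hBe : 1 / Real.exp 1 ≤ B) :
    ∀ ε : ℝ, 0 < ε →
      ε < min ((B - 1 / (n : ℝ)) / (1 + B - 1 / (n : ℝ)))
        (1 - (B - 1 / (n : ℝ)) / (1 + B - 1 / (n : ℝ))) →
      ¬ ∃ q : ℕ → ℝ, (∀ i, 1 ≤ i → q i ∈ Set.Icc (0 : ℝ) 1) ∧
        supA (w n ((B - 1 / (n : ℝ)) / (1 + B - 1 / (n : ℝ)) + ε)) - ε / 3 ≤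
          A (w n ((B - 1 / (n : ℝ)) / (1 + B - 1 / (n : ℝ)) + ε)) q ∧
        supA (w n ((B - 1 / (n : ℝ)) / (1 + B - 1 / (n : ℝ)) - ε)) - ε / 3 ≤
          A (w n ((B - 1 / (n : ℝ)) / (1 + B - 1 / (n : ℝ)) - ε)) q := by
  intro ε hε hεlt
  rintro ⟨q, hq, h1, h2⟩
  have hn3 : (3:ℝ) ≤ n := by exact_mod_cast hn
  have hnpos : (0:ℝ) < n := by linarith
  have he3 : Real.exp 1 < 3 := by
    have := Real.exp_one_lt_d9; linarith
  have hB3 : 1/3 < B := by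
    have h' : (1:ℝ)/3 < 1/Real.exp 1 := one_div_lt_one_div_of_lt (Real.exp_pos 1) he3
    linarith
  have hinv : 1/(n:ℝ) ≤ 1/3 := one_div_le_one_div_of_le (by norm_num) hn3
  obtain ⟨t, htdef⟩ : ∃ t : ℝ, t = B - 1/(n:ℝ) := ⟨_, rfl⟩
  have htpos : 0 < t := by rw [htdef]; linarith
  have h1t : (0:ℝ) < 1 + t := by linarith
  set σ : ℝ := (B - 1 / (n : ℝ)) / (1 + B - 1 / (n : ℝ)) with hσdef
  have hden : (1 + B - 1/(n:ℝ)) ≠ 0 := by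
    have : (1:ℝ) < 1 + B - 1/(n:ℝ) := by linarith
    linarith
  have hσt : σ * (1 + t) = t := by
    rw [hσdef, htdef, show 1 + (B - 1/(n:ℝ)) = 1 + B - 1/(n:ℝ) by ring]
    exact div_mul_cancel₀ _ hden
  -- key identity
  have key : ∀ s : ℝ, s + (1 - s)/(n:ℝ) = (1 - s) * B + (s - σ) * (1 + t) := by
    intro s
    have h : (s - σ) * (1 + t) = s * (1 + t) - t := by
      rw [mul_sub_right_distrib, hσt]
    rw [h, htdef]
    field_simp
    ring
  clear_value σ
  clear hσdef
  have hεσ : ε < σ := lt_of_lt_of_le hεlt (min_le_left _ _)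
  have hεσ' : ε < 1 - σ := lt_of_lt_of_le hεlt (min_le_right _ _)
  have hσ0 : 0 < σ := lt_trans hε hεσ
  have hσ1 : σ < 1 := by linarith
  have hsp0 : (0:ℝ) ≤ σ + ε := by linarith
  have hsp1 : σ + ε < 1 := by linarith
  have hsm0 : (0:ℝ) ≤ σ - ε := by linarith
  have hsm1 : σ - ε < 1 := by linarith
  have e1 : (1 - (σ + ε)) * B = ((σ + ε) + (1 - (σ + ε))/(n:ℝ)) - ε * (1 + t) := by
    have hk := key (σ + ε)
    have h2' : ((σ + ε) - σ) * (1 + t) = ε * (1 + t) := by ring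
    linarith
  have e2 : (σ - ε) + (1 - (σ - ε))/(n:ℝ) = (1 - (σ - ε)) * B - ε * (1 + t) := by
    have hk := key (σ - ε)
    have h2' : ((σ - ε) - σ) * (1 + t) = -(ε * (1 + t)) := by ring
    linarith
  have hq1 := hq 1 le_rfl
  have hCB : CC n q ≤ B := CC_le_B hn hq B hB
  have hC0 : 0 ≤ CC n q := CC_nonneg n hq
  -- upper bounds on A
  have hA1 : A (w n (σ + ε)) q ≤
      q 1 * ((σ + ε) + (1 - (σ + ε))/(n:ℝ)) + (1 - q 1) * ((1 - (σ + ε)) * B) := by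
    rw [A_w_eq hn]
    have hmn : (1 - q 1) * ((1 - (σ + ε)) * CC n q) ≤ (1 - q 1) * ((1 - (σ + ε)) * B) :=
      mul_le_mul_of_nonneg_left
        (mul_le_mul_of_nonneg_left hCB (by linarith)) (by linarith [hq1.2])
    linarith
  have hA2 : A (w n (σ - ε)) q ≤
      q 1 * ((σ - ε) + (1 - (σ - ε))/(n:ℝ)) + (1 - q 1) * ((1 - (σ - ε)) * B) := by
    rw [A_w_eq hn]
    have hmn : (1 - q 1) * ((1 - (σ - ε)) * CC n q) ≤ (1 - q 1) * ((1 - (σ - ε)) * B) :=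
      mul_le_mul_of_nonneg_left
        (mul_le_mul_of_nonneg_left hCB (by linarith)) (by linarith [hq1.2])
    linarith
  -- lower bounds on supA
  have hS1 : (σ + ε) + (1 - (σ + ε))/(n:ℝ) ≤ supA (w n (σ + ε)) := supA_ge hn hsp0 hsp1.le
  have hS2 : (1 - (σ - ε)) * B ≤ supA (w n (σ - ε)) := supA_ge_B hn hsm0 hsm1 B hB
  -- combine
  rw [e1] at hA1
  rw [e2] at hA2
  have expand1 : q 1 * ((σ + ε) + (1 - (σ + ε))/(n:ℝ)) +
      (1 - q 1) * (((σ + ε) + (1 - (σ + ε))/(n:ℝ)) - ε * (1 + t)) =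
      ((σ + ε) + (1 - (σ + ε))/(n:ℝ)) - (1 - q 1) * (ε * (1 + t)) := by ring
  have expand2 : q 1 * ((1 - (σ - ε)) * B - ε * (1 + t)) + (1 - q 1) * ((1 - (σ - ε)) * B) =
      (1 - (σ - ε)) * B - q 1 * (ε * (1 + t)) := by ring
  rw [expand1] at hA1
  rw [expand2] at hA2
  have star1 : (1 - q 1) * (ε * (1 + t)) ≤ ε/3 := by linarith
  have star2 : q 1 * (ε * (1 + t)) ≤ ε/3 := by linarith
  have hsum : ε * (1 + t) ≤ 2*ε/3 := by
    have : (1 - q 1) * (ε * (1 + t)) + q 1 * (ε * (1 + t)) = ε * (1 + t) := by ring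
    linarith
  nlinarith [mul_pos hε htpos]
end
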